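/- arXiv:1909.05924 — 7 statements merged into one kernel-verified Lean document; each statement's English description precedes it below -/
import Mathlib

section
/- For every path-connected topological space X and every n ≥ 2, the bidirectional topological complexity is bounded above by the symmetrized topological complexity: TC^β_n(X) ≤ TC^Σ_n(X). -/
open unitInterval

noncomputable section

/-- The point `j/(n-1)` of the unit interval, for `j : Fin n`.
These are the `n` evaluation points `0, 1/(n-1), …, (n-2)/(n-1), 1`. -/
def evalPt (n : ℕ) (j : Fin n) : unitInterval :=
  ⟨(j : ℝ) / ((n : ℝ) - 1), by
    have hn : 1 ≤ n := j.pos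
    rcases eq_or_lt_of_le hn with h | h
    · have hn1 : n = 1 := h.symm
      subst hn1
      simp [Fin.fin_one_eq_zero j]
    · have h1 : (0 : ℝ) < (n : ℝ) - 1 := by
        have : (1 : ℝ) < (n : ℝ) := by exact_mod_cast h
        linarith
      constructor
      · exact div_nonneg (Nat.cast_nonneg _) h1.le
      · rw [div_le_one h1]
        have hj : (j : ℕ) + 1 ≤ n := j.is_lt
        have : ((j : ℕ) : ℝ) + 1 ≤ (n : ℝ) := by exact_mod_cast hj
        linarith⟩

/-- Coordinate reversal (the involution `β`) on `n`-tuples: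
`β·(x_1,…,x_n) = (x_n,…,x_1)`. -/
def rtuple {X : Type*} {n : ℕ} (x : Fin n → X) : Fin n → X := fun j => x j.rev

/-- Path reversal (the involution `β`) on the free path space `C(I,X)`:
`(β·γ)(t) = γ(1-t)`. -/
def rpath {X : Type*} [TopologicalSpace X] (γ : C(unitInterval, X)) : C(unitInterval, X) :=
  γ.comp ⟨unitInterval.symm, unitInterval.continuous_symm⟩

/-- `X^n` can be covered by `k` open sets, on each of which there is a continuous
section of the evaluation map `e_n : C(I,X) → X^n`,
`γ ↦ (γ(0), γ(1/(n-1)), …, γ(1))`. -/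
def HasPlanners (X : Type*) [TopologicalSpace X] (n k : ℕ) : Prop :=
  ∃ U : Fin k → Set (Fin n → X),
    (∀ i, IsOpen (U i)) ∧ (⋃ i, U i) = Set.univ ∧
    (∀ i, ∃ s : C(U i, C(unitInterval, X)),
      ∀ x : U i, ∀ j : Fin n, s x (evalPt n j) = (x : Fin n → X) j)

/-- The `n`-th (ordinary, higher) topological complexity `TC_n(X)`, as a value in `ℕ∞`. -/
def TCn (X : Type*) [TopologicalSpace X] (n : ℕ) : ℕ∞ :=
  sInf {k : ℕ∞ | ∃ m : ℕ, (m : ℕ∞) = k ∧ HasPlanners X n m}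

/-- `X^n` can be covered by `k` β-invariant open sets, on each of which there is a
continuous β-equivariant section of the evaluation map `e_n : C(I,X) → X^n`
(a bidirectional motion planner). -/
def HasBidirPlanners (X : Type*) [TopologicalSpace X] (n k : ℕ) : Prop :=
  ∃ U : Fin k → Set (Fin n → X),
    (∀ i, IsOpen (U i)) ∧ (⋃ i, U i) = Set.univ ∧
    (∀ i, ∀ x ∈ U i, rtuple x ∈ U i) ∧
    (∀ i, ∃ s : C(U i, C(unitInterval, X)),
      (∀ x : U i, ∀ j : Fin n, s x (evalPt n j) = (x : Fin n → X) j) ∧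
      (∀ x : U i, ∀ hx : rtuple (x : Fin n → X) ∈ U i,
        s ⟨rtuple (x : Fin n → X), hx⟩ = rpath (s x)))

/-- The `n`-th bidirectional topological complexity `TC^β_n(X)`, as a value in `ℕ∞`. -/
def TCbeta (X : Type*) [TopologicalSpace X] (n : ℕ) : ℕ∞ :=
  sInf {k : ℕ∞ | ∃ m : ℕ, (m : ℕ∞) = k ∧ HasBidirPlanners X n m}

/-- The action of a permutation `sg ∈ Σ_n` on `n`-tuples (by permuting coordinates). -/
def permTuple {X : Type*} {n : ℕ} (sg : Equiv.Perm (Fin n)) (x : Fin n → X) : Fin n → X :=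
  fun j => x (sg j)

/-- `X^n` can be covered by `k` `Σ_n`-invariant open sets, on each of which there is a
continuous `Σ_n`-equivariant section of `E_n : X^{J_n} → X^n`,
`(α_1,…,α_n) ↦ (α_1(1),…,α_n(1))`, where `X^{J_n}` is the space of `n`-tuples of paths
with a common initial point. -/
def HasSymPlanners (X : Type*) [TopologicalSpace X] (n k : ℕ) : Prop :=
  ∃ U : Fin k → Set (Fin n → X),
    (∀ i, IsOpen (U i)) ∧ (⋃ i, U i) = Set.univ ∧
    (∀ i, ∀ sg : Equiv.Perm (Fin n), ∀ x ∈ U i, permTuple sg x ∈ U i) ∧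
    (∀ i, ∃ s : C(U i, Fin n → C(unitInterval, X)),
      (∀ x : U i, ∀ j j' : Fin n, s x j 0 = s x j' 0) ∧
      (∀ x : U i, ∀ j : Fin n, s x j 1 = (x : Fin n → X) j) ∧
      (∀ x : U i, ∀ sg : Equiv.Perm (Fin n),
        ∀ hx : permTuple sg (x : Fin n → X) ∈ U i,
        s ⟨permTuple sg (x : Fin n → X), hx⟩ = permTuple sg (s x)))

/-- The `n`-th symmetrized topological complexity `TC^Σ_n(X)`, as a value in `ℕ∞`. -/
def TCsym (X : Type*) [TopologicalSpace X] (n : ℕ) : ℕ∞ :=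
  sInf {k : ℕ∞ | ∃ m : ℕ, (m : ℕ∞) = k ∧ HasSymPlanners X n m}

/-- The unit sphere `S^m ⊂ ℝ^{m+1}`. -/
abbrev Sph (m : ℕ) : Type :=
  Metric.sphere (0 : EuclideanSpace ℝ (Fin (m + 1))) 1

end

section Aux

open Set

/-- From a symmetric motion planner one constructs a bidirectional motion planner
with the same number of open sets, by traversing the "zig-zag" path through the
`n` evaluation points built from the `n` paths with common initial point. -/
theorem hasBidirPlanners_of_hasSymPlanners {X : Type*} [TopologicalSpace X]
    {n m : ℕ} (hn : 2 ≤ n) (h : HasSymPlanners X n m) : HasBidirPlanners X n m := by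
  classical
  obtain ⟨U, hopen, hcov, hinv, hsec⟩ := h
  have hrt : ∀ x : Fin n → X, rtuple x = permTuple Fin.revPerm x := fun x =>
    funext fun j => by simp [rtuple, permTuple]
  refine ⟨U, hopen, hcov, fun i x hx => by rw [hrt]; exact hinv i _ x hx, fun i => ?_⟩
  obtain ⟨s, h0, h1, heq⟩ := hsec i
  set N : ℝ := (n : ℝ) - 1 with hNdef
  have hn2 : (2 : ℝ) ≤ (n : ℝ) := by exact_mod_cast hn
  have hN1 : (1 : ℝ) ≤ N := by rw [hNdef]; linarith
  have hN0 : (0 : ℝ) < N := lt_of_lt_of_le one_pos hN1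
  -- the "tent" reparametrization, clamped to [0,1]
  set tent : ℝ → unitInterval := fun r => Set.projIcc (0:ℝ) 1 zero_le_one r with htent
  have tent_right : tent 1 = 1 := by
    apply Subtype.ext
    show (Set.projIcc (0:ℝ) 1 zero_le_one 1 : ℝ) = 1
    rw [Set.coe_projIcc]; norm_num
  have tent_nonpos : ∀ r : ℝ, r ≤ 0 → tent r = 0 := by
    intro r hr
    apply Subtype.ext
    show (Set.projIcc (0:ℝ) 1 zero_le_one r : ℝ) = 0
    rw [Set.coe_projIcc, min_eq_right (hr.trans zero_le_one), max_eq_left hr]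
  -- one continuous map for each "tooth"
  set g : Fin n → (U i × unitInterval) → X := fun j p =>
    s p.1 j (tent (1 - 2 * |(p.2 : ℝ) * N - (j : ℝ)|)) with hgdef
  have hg : ∀ j, Continuous (g j) := by
    intro j
    have hs1 : Continuous fun p : U i × unitInterval => s p.1 j :=
      ((continuous_apply j).comp (map_continuous s)).comp continuous_fst
    have hinner : Continuous fun p : U i × unitInterval =>
        (1 : ℝ) - 2 * |(p.2 : ℝ) * N - (j : ℝ)| := by fun_prop
    exact hs1.eval (continuous_projIcc.comp hinner)
  -- the closed sets on which the teeth are glued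
  set B : Fin n → Set (U i × unitInterval) := fun j =>
    {p | |(p.2 : ℝ) * N - (j : ℝ)| ≤ 1/2} with hBdef
  have hBcl : ∀ j, IsClosed (B j) := by
    intro j
    have : B j = (fun p : U i × unitInterval => |(p.2 : ℝ) * N - (j : ℝ)|) ⁻¹' (Set.Iic (1/2)) := rfl
    rw [this]
    exact isClosed_Iic.preimage (by fun_prop)
  -- every `t` is in some `B j`
  have hBt : ∀ t : unitInterval, ∃ j : Fin n, |(t : ℝ) * N - (j : ℝ)| ≤ 1/2 := by
    intro t
    set τ : ℝ := (t : ℝ) * N with hτdef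
    have h0τ : 0 ≤ τ := mul_nonneg t.2.1 hN0.le
    have hτN : τ ≤ N := by
      have h2 := t.2.2
      calc τ = (t : ℝ) * N := rfl
        _ ≤ 1 * N := by
            exact mul_le_mul_of_nonneg_right h2 hN0.le
        _ = N := one_mul N
    have hfl : ((⌊τ + 1/2⌋₊ : ℕ) : ℝ) ≤ τ + 1/2 := Nat.floor_le (by linarith)
    have hfl2 : τ + 1/2 < (⌊τ + 1/2⌋₊ : ℕ) + 1 := Nat.lt_floor_add_one _
    have hlt : (⌊τ + 1/2⌋₊ : ℕ) < n := by
      have : ((⌊τ + 1/2⌋₊ : ℕ) : ℝ) < (n : ℝ) := by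
        have : τ + 1/2 ≤ N + 1/2 := by linarith
        rw [hNdef] at this
        linarith
      exact_mod_cast this
    refine ⟨⟨⌊τ + 1/2⌋₊, hlt⟩, ?_⟩
    have : ((⟨⌊τ + 1/2⌋₊, hlt⟩ : Fin n) : ℝ) = ((⌊τ + 1/2⌋₊ : ℕ) : ℝ) := rfl
    rw [abs_le]
    constructor <;> [skip; skip] <;> rw [this] <;> linarith
  -- consistency of the teeth on overlaps
  have hcons : ∀ (p : U i × unitInterval) (j j' : Fin n),
      p ∈ B j → p ∈ B j' → g j p = g j' p := by
    intro p j j' hpj hpj'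
    by_cases hjj : j = j'
    · rw [hjj]
    · have hne : (j : ℕ) ≠ (j' : ℕ) := fun hh => hjj (Fin.ext hh)
      have hone : (1 : ℝ) ≤ |(j : ℝ) - (j' : ℝ)| := by
        rcases Nat.lt_or_ge (j : ℕ) (j' : ℕ) with hlt | hge
        · have : (j : ℕ) + 1 ≤ (j' : ℕ) := hlt
          have h' : ((j : ℕ) : ℝ) + 1 ≤ ((j' : ℕ) : ℝ) := by exact_mod_cast this
          rw [abs_sub_comm, abs_of_nonneg (by linarith)]
          linarith
        · have hlt' : (j' : ℕ) < (j : ℕ) := lt_of_le_of_ne hge (Ne.symm hne)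
          have : (j' : ℕ) + 1 ≤ (j : ℕ) := hlt'
          have h' : ((j' : ℕ) : ℝ) + 1 ≤ ((j : ℕ) : ℝ) := by exact_mod_cast this
          rw [abs_of_nonneg (by linarith)]
          linarith
      have hpj1 : |(p.2 : ℝ) * N - (j : ℝ)| ≤ 1/2 := hpj
      have hpj2 : |(p.2 : ℝ) * N - (j' : ℝ)| ≤ 1/2 := hpj'
      have htri : |(j : ℝ) - (j' : ℝ)| ≤
          |(p.2 : ℝ) * N - (j' : ℝ)| + |(p.2 : ℝ) * N - (j : ℝ)| := by
        have heq2 : (j : ℝ) - (j' : ℝ) =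
            ((p.2 : ℝ) * N - (j' : ℝ)) - ((p.2 : ℝ) * N - (j : ℝ)) := by ring
        rw [heq2]
        exact abs_sub _ _
      have ha : (1:ℝ)/2 ≤ |(p.2 : ℝ) * N - (j : ℝ)| := by linarith
      have hb : (1:ℝ)/2 ≤ |(p.2 : ℝ) * N - (j' : ℝ)| := by linarith
      rw [hgdef]
      simp only
      rw [tent_nonpos _ (by linarith), tent_nonpos _ (by linarith)]
      exact h0 p.1 j j'
  -- choose for each point an index
  choose idx hidx using hBt
  set f : U i × unitInterval → X := fun p => g (idx p.2) p with hfdef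
  have hfeq : ∀ (p : U i × unitInterval) (j : Fin n), p ∈ B j → f p = g j p :=
    fun p j hp => hcons p _ j (hidx p.2) hp
  have hf : Continuous f := by
    apply (locallyFinite_of_finite B).continuous
    · exact Set.iUnion_eq_univ_iff.2 fun p => ⟨idx p.2, hidx p.2⟩
    · exact hBcl
    · intro j
      exact ((hg j).continuousOn).congr fun p hp => hfeq p j hp
  set F : C(U i × unitInterval, X) := ⟨f, hf⟩ with hFdef
  refine ⟨F.curry, ?_, ?_⟩
  · -- the section property
    intro x j
    have hτ : ((evalPt n j : unitInterval) : ℝ) * N = (j : ℝ) := by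
      have : ((evalPt n j : unitInterval) : ℝ) = (j : ℝ) / N := rfl
      rw [this, div_mul_cancel₀ _ (ne_of_gt hN0)]
    have hmem : ((x, evalPt n j) : U i × unitInterval) ∈ B j := by
      show |((evalPt n j : unitInterval) : ℝ) * N - (j : ℝ)| ≤ 1/2
      rw [hτ, sub_self, abs_zero]
      norm_num
    calc F.curry x (evalPt n j) = f (x, evalPt n j) := rfl
      _ = g j (x, evalPt n j) := hfeq _ j hmem
      _ = s x j (tent (1 - 2 * |((evalPt n j : unitInterval) : ℝ) * N - (j : ℝ)|)) := rfl
      _ = s x j 1 := by rw [hτ, sub_self, abs_zero, mul_zero, sub_zero, tent_right]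
      _ = (x : Fin n → X) j := h1 x j
  · -- the equivariance property
    intro x hx
    have hx' : permTuple Fin.revPerm (x : Fin n → X) ∈ U i := by rw [← hrt]; exact hx
    ext t
    obtain ⟨j, hj⟩ : ∃ j : Fin n, |(t : ℝ) * N - (j : ℝ)| ≤ 1/2 := ⟨idx t, hidx t⟩
    have hrev : ((Fin.rev j : Fin n) : ℝ) = N - (j : ℝ) := by
      have hv : ((Fin.rev j : Fin n) : ℕ) = n - ((j : ℕ) + 1) := Fin.val_rev j
      have hle : (j : ℕ) + 1 ≤ n := j.is_lt
      have : (((Fin.rev j : Fin n) : ℕ) : ℝ) = (n : ℝ) - (((j : ℕ) : ℝ) + 1) := by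
        rw [hv, Nat.cast_sub hle]
        push_cast
        ring
      rw [this, hNdef]
      ring
    have habs : |((unitInterval.symm t : unitInterval) : ℝ) * N - ((Fin.rev j : Fin n) : ℝ)|
        = |(t : ℝ) * N - (j : ℝ)| := by
      rw [unitInterval.coe_symm_eq, hrev]
      have : ((1 : ℝ) - (t : ℝ)) * N - (N - (j : ℝ)) = -((t : ℝ) * N - (j : ℝ)) := by ring
      rw [this, abs_neg]
    have hmem1 : ((⟨rtuple (x : Fin n → X), hx⟩, t) : U i × unitInterval) ∈ B j := hj
    have hmem2 : ((x, unitInterval.symm t) : U i × unitInterval) ∈ B (Fin.rev j) := by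
      show |((unitInterval.symm t : unitInterval) : ℝ) * N - ((Fin.rev j : Fin n) : ℝ)| ≤ 1/2
      rw [habs]; exact hj
    have hsub : (⟨rtuple (x : Fin n → X), hx⟩ : U i)
        = ⟨permTuple Fin.revPerm (x : Fin n → X), hx'⟩ := Subtype.ext (hrt _)
    calc F.curry ⟨rtuple (x : Fin n → X), hx⟩ t
        = f (⟨rtuple (x : Fin n → X), hx⟩, t) := rfl
      _ = g j (⟨rtuple (x : Fin n → X), hx⟩, t) := hfeq _ j hmem1
      _ = s ⟨rtuple (x : Fin n → X), hx⟩ j (tent (1 - 2 * |(t : ℝ) * N - (j : ℝ)|)) := rfl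
      _ = s x (Fin.rev j) (tent (1 - 2 * |(t : ℝ) * N - (j : ℝ)|)) := by
          rw [hsub, heq x Fin.revPerm hx']
          simp [permTuple]
      _ = g (Fin.rev j) (x, unitInterval.symm t) := by
          rw [hgdef]
          simp only
          rw [habs]
      _ = f (x, unitInterval.symm t) := (hfeq _ _ hmem2).symm
      _ = rpath (F.curry x) t := rfl

end Aux

/-- For every path-connected space `X` and every `n ≥ 2`,
`TC^β_n(X) ≤ TC^Σ_n(X)`. -/

theorem TCbeta_le_TCsym (X : Type*) [TopologicalSpace X] [PathConnectedSpace X]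
    (n : ℕ) (hn : 2 ≤ n) :
    TCbeta X n ≤ TCsym X n := by
  apply sInf_le_sInf
  rintro k ⟨m, rfl, h⟩
  exact ⟨m, rfl, hasBidirPlanners_of_hasSymPlanners hn h⟩
end

section
/- Bidirectional topological complexity is a homotopy invariant: if X and Y are path-connected topological spaces that are homotopy equivalent, then TC^β_n(X) = TC^β_n(Y) for every n ≥ 2. -/
open unitInterval

noncomputable section AuxTC

variable {X Y : Type*} [TopologicalSpace X] [TopologicalSpace Y]

/-- clamp to the unit interval -/
def rext (r : ℝ) : unitInterval := Set.projIcc 0 1 zero_le_one r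

lemma continuous_rext : Continuous rext := by
  unfold rext; exact continuous_projIcc

lemma rext_of_mem {r : ℝ} (h : r ∈ Set.Icc (0:ℝ) 1) : (rext r : ℝ) = r := by
  rw [rext, Set.projIcc_of_mem _ h]

lemma rext_zero : rext 0 = 0 := by ext; simp [rext_of_mem]
lemma rext_one : rext 1 = 1 := by ext; simp [rext_of_mem]

lemma rext_symm (r : ℝ) : unitInterval.symm (rext r) = rext (1 - r) := by
  ext
  simp only [unitInterval.coe_symm_eq, rext, Set.projIcc, max_def, min_def]
  split_ifs <;> linarith

/-- evaluation of a path at a clamped real time -/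
def pext (γ : C(unitInterval, Y)) (r : ℝ) : Y := γ (rext r)

lemma continuous_pext_pair :
    Continuous fun p : C(unitInterval, Y) × ℝ => pext p.1 p.2 := by
  exact ContinuousEval.continuous_eval.comp
    (continuous_fst.prodMk (continuous_rext.comp continuous_snd))

lemma glue_closed {α β : Type*} [TopologicalSpace α] [TopologicalSpace β] {ι : Type*}
    [Finite ι] {s : ι → Set α} {f : α → β} (hcl : ∀ i, IsClosed (s i))
    (hcov : ⋃ i, s i = Set.univ) (hf : ∀ i, ContinuousOn f (s i)) : Continuous f := by
  rw [continuous_iff_isClosed]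
  intro t ht
  have : f ⁻¹' t = ⋃ i, s i ∩ f ⁻¹' t := by
    rw [← Set.iUnion_inter, hcov, Set.univ_inter]
  rw [this]
  exact isClosed_iUnion_of_finite fun i => (hf i).preimage_isClosed_of_isClosed (hcl i) ht

end AuxTC

noncomputable section CoreTC

variable {X Y : Type*} [TopologicalSpace X] [TopologicalSpace Y]

def gidx (n : ℕ) (w : ℝ) : ℕ := min (n - 2) ⌊w⌋₊

lemma gidx_le (n : ℕ) (w : ℝ) : gidx n w ≤ n - 2 := min_le_left _ _

lemma gidx_lt {n : ℕ} (hn : 2 ≤ n) (w : ℝ) : gidx n w < n := by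
  have := gidx_le n w; omega

lemma gidx_succ_lt {n : ℕ} (hn : 2 ≤ n) (w : ℝ) : gidx n w + 1 < n := by
  have := gidx_le n w; omega

lemma gidx_eq {n : ℕ} {j : ℕ} (hj : j ≤ n - 2) {w : ℝ} (h1 : (j:ℝ) ≤ w)
    (h2 : w < j + 1) : gidx n w = j := by
  have h0 : (0:ℝ) ≤ w := le_trans (by positivity) h1
  have hf : ⌊w⌋₊ = j :=
    (Nat.floor_eq_iff h0).mpr ⟨by exact_mod_cast h1, by exact_mod_cast h2⟩
  simp [gidx, hf, min_eq_right hj]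

/-- The core piecewise path construction. -/
def core {n : ℕ} (hn : 2 ≤ n) (H : C(unitInterval × X, X)) (g : C(Y, X))
    (x : Fin n → X) (γ : C(unitInterval, Y)) (w : ℝ) : X :=
  if w - gidx n w ≤ 1/3 then
    H (rext (1 - 3*(w - gidx n w)), x ⟨gidx n w, gidx_lt hn w⟩)
  else if w - gidx n w ≤ 2/3 then
    g (pext γ (((gidx n w : ℝ) + 3*(w - gidx n w) - 1)/((n:ℝ) - 1)))
  else
    H (rext (3*(w - gidx n w) - 2), x ⟨gidx n w + 1, gidx_succ_lt hn w⟩)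

lemma rext_evalPt {n : ℕ} (j : ℕ) (h : j < n) :
    rext ((j:ℝ)/((n:ℝ)-1)) = evalPt n ⟨j, h⟩ := by
  ext
  exact rext_of_mem (evalPt n ⟨j, h⟩).2

variable {n : ℕ} (hn : 2 ≤ n) (f : C(X, Y)) (g : C(Y, X)) (H : C(unitInterval × X, X))

lemma core_piece0 {x : Fin n → X} {γ : C(unitInterval, Y)} {j : ℕ} (hj : j ≤ n - 2)
    {w : ℝ} (h1 : (j:ℝ) ≤ w) (h2 : w ≤ j + 1/3) (hjn : j < n) :
    core hn H g x γ w = H (rext (1 - 3*(w - j)), x ⟨j, hjn⟩) := by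
  have hg : gidx n w = j := gidx_eq hj h1 (by linarith)
  rw [core]
  simp only [hg]
  rw [if_pos (by linarith)]

lemma core_piece1 {x : Fin n → X} {γ : C(unitInterval, Y)}
    (hH0 : ∀ a, H (0, a) = g (f a))
    (hc : ∀ j : Fin n, γ (evalPt n j) = f (x j))
    {j : ℕ} (hj : j ≤ n - 2) {w : ℝ} (h1 : (j:ℝ) + 1/3 ≤ w) (h2 : w ≤ j + 2/3) :
    core hn H g x γ w = g (pext γ (((j:ℝ) + 3*(w - j) - 1)/((n:ℝ) - 1))) := by
  have hg : gidx n w = j := gidx_eq hj (by linarith) (by linarith)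
  rw [core]
  simp only [hg]
  rcases eq_or_lt_of_le h1 with he | hlt
  · rw [if_pos (by linarith)]
    have e1 : 1 - 3*(w - (j:ℝ)) = 0 := by linarith
    rw [e1, rext_zero, hH0]
    have e2 : ((j:ℝ) + 3*(w - j) - 1)/((n:ℝ)-1) = (j:ℝ)/((n:ℝ)-1) := by
      rw [← he]; ring_nf
    rw [e2]
    congr 1
    rw [pext, rext_evalPt j (by omega)]
    exact (hc ⟨j, by omega⟩).symm
  · rw [if_neg (by linarith), if_pos (by linarith)]

lemma core_piece2 {x : Fin n → X} {γ : C(unitInterval, Y)}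
    (hH0 : ∀ a, H (0, a) = g (f a)) (hH1 : ∀ a, H (1, a) = a)
    (hc : ∀ j : Fin n, γ (evalPt n j) = f (x j))
    {j : ℕ} (hj : j ≤ n - 2) {w : ℝ} (h1 : (j:ℝ) + 2/3 ≤ w) (h2 : w ≤ j + 1)
    (hjn : j + 1 < n) :
    core hn H g x γ w = H (rext (3*(w - j) - 2), x ⟨j+1, hjn⟩) := by
  rcases lt_or_eq_of_le h2 with hlt | heq
  · have hg : gidx n w = j := gidx_eq hj (by linarith) hlt
    rw [core]
    simp only [hg]
    rcases eq_or_lt_of_le h1 with he | hlt2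
    · rw [if_neg (by linarith), if_pos (by linarith)]
      have e1 : 3*(w - (j:ℝ)) - 2 = 0 := by linarith
      rw [e1, rext_zero, hH0]
      have e2 : ((j:ℝ) + 3*(w - j) - 1)/((n:ℝ)-1) = (((j:ℕ)+1:ℕ):ℝ)/((n:ℝ)-1) := by
        push_cast
        rw [← he]; ring_nf
      rw [e2]
      congr 1
      rw [pext, rext_evalPt (j+1) (by omega)]
      exact hc ⟨j+1, by omega⟩
    · rw [if_neg (by linarith), if_neg (by linarith)]
  · by_cases hj1 : j + 1 ≤ n - 2
    · have hw : (((j:ℕ)+1:ℕ):ℝ) ≤ w := by push_cast; linarith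
      have hg : gidx n w = j + 1 := gidx_eq hj1 hw (by push_cast; linarith)
      rw [core]
      simp only [hg]
      rw [if_pos (by push_cast; linarith)]
      have e1 : 1 - 3*(w - ((j+1:ℕ):ℝ)) = 1 := by push_cast; linarith
      have e2 : 3*(w - (j:ℝ)) - 2 = 1 := by linarith
      rw [e1, e2]
    · have hg : gidx n w = j := by
        have hw : w = (((j:ℕ)+1:ℕ):ℝ) := by push_cast; linarith
        rw [gidx, hw, Nat.floor_natCast]
        omega
      rw [core]
      simp only [hg]
      rw [if_neg (by linarith), if_neg (by linarith)]

lemma core_grid (hH1 : ∀ a, H (1, a) = a) (x : Fin n → X) (γ : C(unitInterval, Y))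
    (j : Fin n) : core hn H g x γ ((j:ℕ):ℝ) = x j := by
  by_cases hj : (j:ℕ) ≤ n - 2
  · have hg : gidx n ((j:ℕ):ℝ) = (j:ℕ) := gidx_eq hj le_rfl (by linarith)
    rw [core]
    simp only [hg]
    rw [if_pos (by norm_num)]
    have e1 : (1:ℝ) - 3*(((j:ℕ):ℝ) - ((j:ℕ):ℝ)) = 1 := by ring
    rw [e1, rext_one, hH1]
  · have hj' : (j:ℕ) = n - 1 := by have := j.is_lt; omega
    have hw : (((j:ℕ)):ℝ) = ((n-1:ℕ):ℝ) := by rw [hj']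
    have hg : gidx n ((j:ℕ):ℝ) = n - 2 := by
      rw [gidx, hw, Nat.floor_natCast]
      omega
    have hcast : ((n-2:ℕ):ℝ) = (n:ℝ) - 2 := by
      rw [Nat.cast_sub (by omega)]; norm_num
    have hcast1 : (((j:ℕ)):ℝ) = (n:ℝ) - 1 := by
      rw [hw, Nat.cast_sub (by omega)]; norm_num
    have hu : (((j:ℕ)):ℝ) - ((n-2:ℕ):ℝ) = 1 := by rw [hcast, hcast1]; ring
    rw [core]
    simp only [hg]
    rw [if_neg (by rw [hu]; norm_num), if_neg (by rw [hu]; norm_num)]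
    have e1 : 3*((((j:ℕ)):ℝ) - ((n-2:ℕ):ℝ)) - 2 = 1 := by rw [hu]; ring
    rw [e1, rext_one, hH1]
    congr 1
    exact Fin.ext (by simp; omega)

end CoreTC

noncomputable section SymTC

variable {X Y : Type*} [TopologicalSpace X] [TopologicalSpace Y]

lemma pext_rpath (γ : C(unitInterval, Y)) (r : ℝ) :
    pext (rpath γ) r = pext γ (1 - r) := by
  rw [pext, pext, rpath]
  simp only [ContinuousMap.comp_apply, ContinuousMap.coe_mk]
  rw [rext_symm]

lemma rtuple_mk {n : ℕ} (x : Fin n → X) (a : ℕ) (h : a < n) (h' : n - 1 - a < n) :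
    rtuple x ⟨a, h⟩ = x ⟨n - 1 - a, h'⟩ := by
  rw [rtuple]
  congr 1
  apply Fin.ext
  rw [Fin.val_rev]
  show n - (a + 1) = n - 1 - a
  omega

lemma fin_app_congr {X : Type*} {n a b : ℕ} (x : Fin n → X) (h : a = b)
    {ha : a < n} {hb : b < n} : x ⟨a, ha⟩ = x ⟨b, hb⟩ := by
  subst h; rfl

lemma symm_evalPt {n : ℕ} (hn : 2 ≤ n) (j : Fin n) :
    unitInterval.symm (evalPt n j) = evalPt n j.rev := by
  have hN : ((n:ℝ) - 1) ≠ 0 := by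
    have : (2:ℝ) ≤ (n:ℝ) := by exact_mod_cast hn
    linarith
  ext
  rw [unitInterval.coe_symm_eq]
  show 1 - (j:ℝ)/((n:ℝ)-1) = ((j.rev : ℕ):ℝ)/((n:ℝ)-1)
  have hj : (j:ℕ) < n := j.is_lt
  have hrev : ((j.rev : ℕ):ℝ) = (n:ℝ) - 1 - ((j:ℕ):ℝ) := by
    rw [Fin.val_rev]
    rw [show n - ((j:ℕ) + 1) = n - 1 - (j:ℕ) by omega]
    rw [Nat.sub_sub, Nat.cast_sub (by omega)]
    push_cast
    ring
  rw [hrev]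
  field_simp

lemma compat_rev {n : ℕ} (hn : 2 ≤ n) (f : C(X, Y)) {x : Fin n → X} {γ : C(unitInterval, Y)}
    (hc : ∀ j : Fin n, γ (evalPt n j) = f (x j)) :
    ∀ j : Fin n, (rpath γ) (evalPt n j) = f (rtuple x j) := by
  intro j
  rw [rpath]
  simp only [ContinuousMap.comp_apply, ContinuousMap.coe_mk]
  rw [symm_evalPt hn, hc j.rev]
  rfl

lemma cast_n2 {n : ℕ} (hn : 2 ≤ n) : ((n-2:ℕ):ℝ) = (n:ℝ) - 2 := by
  rw [Nat.cast_sub (by omega)]; norm_num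

lemma cast_n2j {n j : ℕ} (hn : 2 ≤ n) (hj : j ≤ n - 2) :
    ((n-2-j:ℕ):ℝ) = (n:ℝ) - 2 - (j:ℝ) := by
  rw [Nat.sub_sub, Nat.cast_sub (by omega)]
  push_cast
  ring

variable {n : ℕ} (hn : 2 ≤ n) (f : C(X, Y)) (g : C(Y, X)) (H : C(unitInterval × X, X))

lemma core_symm (hH0 : ∀ a, H (0, a) = g (f a)) (hH1 : ∀ a, H (1, a) = a)
    {x : Fin n → X} {γ : C(unitInterval, Y)}
    (hc : ∀ j : Fin n, γ (evalPt n j) = f (x j))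
    {w : ℝ} (h0 : 0 ≤ w) (h1 : w ≤ (n:ℝ) - 1) :
    core hn H g (rtuple x) (rpath γ) w = core hn H g x γ (((n:ℝ) - 1) - w) := by
  have hc' := compat_rev hn f hc
  -- find the segment containing w
  obtain ⟨j, hj, hw1, hw2⟩ : ∃ j : ℕ, j ≤ n - 2 ∧ (j:ℝ) ≤ w ∧ w ≤ (j:ℝ) + 1 := by
    by_cases hfl : ⌊w⌋₊ ≤ n - 2
    · exact ⟨⌊w⌋₊, hfl, Nat.floor_le h0, (Nat.lt_floor_add_one w).le⟩
    · refine ⟨n - 2, le_rfl, ?_, ?_⟩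
      · have := Nat.floor_le h0
        have h2 : ((n-2:ℕ):ℝ) ≤ ((⌊w⌋₊ : ℕ):ℝ) := by exact_mod_cast (by omega : n - 2 ≤ ⌊w⌋₊)
        linarith
      · rw [cast_n2 hn]; linarith
  have hjcast : ((n-2-j:ℕ):ℝ) = (n:ℝ) - 2 - (j:ℝ) := cast_n2j hn hj
  have hjR : (j:ℝ) ≤ (n:ℝ) - 2 := by
    have := cast_n2 hn
    exact_mod_cast (by exact_mod_cast Nat.cast_le.mpr hj : ((j:ℕ):ℝ) ≤ ((n-2:ℕ):ℝ)).trans_eq this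
  set j' : ℕ := n - 2 - j with hj'def
  have hj' : j' ≤ n - 2 := by omega
  rcases le_total (w - (j:ℝ)) (1/3) with hu | hu
  · -- first third ↦ last third of the reversed segment
    rw [core_piece0 hn g H hj hw1 (by linarith) (by omega)]
    rw [core_piece2 hn f g H hH0 hH1 hc (j := j') hj'
        (by rw [hjcast]; linarith) (by rw [hjcast]; linarith) (by omega)]
    rw [rtuple_mk x j (by omega) (by omega)]
    have e : 3*((((n:ℝ)-1) - w) - ((j':ℕ):ℝ)) - 2 = 1 - 3*(w - (j:ℝ)) := by
      rw [hjcast]; ring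
    rw [e, fin_app_congr x (show n - 1 - j = j' + 1 by omega)]
  · rcases le_total (w - (j:ℝ)) (2/3) with hu2 | hu2
    · -- middle third ↦ middle third
      rw [core_piece1 hn f g H hH0 hc' hj (by linarith) (by linarith)]
      rw [core_piece1 hn f g H hH0 hc (j := j') hj'
          (by rw [hjcast]; linarith) (by rw [hjcast]; linarith)]
      rw [pext_rpath]
      congr 2
      rw [hjcast]
      have hN : ((n:ℝ) - 1) ≠ 0 := by
        have : (2:ℝ) ≤ (n:ℝ) := by exact_mod_cast hn
        linarith
      field_simp
      ring
    · -- last third ↦ first third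
      rw [core_piece2 hn f g H hH0 hH1 hc' hj (by linarith) hw2 (by omega)]
      rw [core_piece0 hn g H (j := j') hj'
          (by rw [hjcast]; linarith) (by rw [hjcast]; linarith) (by omega)]
      rw [rtuple_mk x (j+1) (by omega) (by omega)]
      have e : 1 - 3*((((n:ℝ)-1) - w) - ((j':ℕ):ℝ)) = 3*(w - (j:ℝ)) - 2 := by
        rw [hjcast]; ring
      rw [e, fin_app_congr x (show n - 1 - (j + 1) = j' by omega)]

end SymTC

noncomputable section TransferTC

set_option maxHeartbeats 1000000

lemma transfer_planners {X Y : Type*} [TopologicalSpace X] [TopologicalSpace Y]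
    (E : ContinuousMap.HomotopyEquiv X Y) {n k : ℕ} (hn : 2 ≤ n)
    (hY : HasBidirPlanners Y n k) : HasBidirPlanners X n k := by
  obtain ⟨U, hUo, hUc, hUinv, hUs⟩ := hY
  obtain ⟨f, g, hli, _⟩ := E
  obtain ⟨H0⟩ := hli
  set H : C(unitInterval × X, X) := H0.toContinuousMap with hHdef
  have hH0 : ∀ a, H (0, a) = g (f a) := fun a => H0.apply_zero a
  have hH1 : ∀ a, H (1, a) = a := fun a => H0.apply_one a
  have hNpos : (0:ℝ) < (n:ℝ) - 1 := by
    have : (2:ℝ) ≤ (n:ℝ) := by exact_mod_cast hn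
    linarith
  have hFcont : Continuous (fun x : Fin n → X => f ∘ x) :=
    continuous_pi fun j => f.continuous.comp (continuous_apply j)
  refine ⟨fun i => (fun x : Fin n → X => f ∘ x) ⁻¹' (U i),
    fun i => (hUo i).preimage hFcont, ?_, ?_, ?_⟩
  · apply Set.eq_univ_of_forall
    intro x
    have hx : f ∘ x ∈ ⋃ i, U i := by rw [hUc]; exact Set.mem_univ _
    obtain ⟨i, hi⟩ := Set.mem_iUnion.mp hx
    exact Set.mem_iUnion.mpr ⟨i, hi⟩
  · intro i x hx
    have hre : f ∘ rtuple x = rtuple (f ∘ x) := funext fun j => rfl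
    simp only [Set.mem_preimage] at *
    rw [hre]
    exact hUinv i _ hx
  · intro i
    obtain ⟨s, hs_eval, hs_sym⟩ := hUs i
    set V : Set (Fin n → X) := (fun x : Fin n → X => f ∘ x) ⁻¹' (U i) with hVdef
    have hρc : Continuous (fun v : V => (⟨f ∘ (v : Fin n → X), v.2⟩ : U i)) :=
      Continuous.subtype_mk (hFcont.comp continuous_subtype_val) _
    set ρ : C(V, U i) := ⟨_, hρc⟩ with hρdef
    set sv : C(V, C(unitInterval, Y)) := s.comp ρ with hsvdef
    have hcv : ∀ (v : V) (j : Fin n), (sv v) (evalPt n j) = f ((v : Fin n → X) j) :=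
      fun v j => hs_eval (ρ v) j
    set Φ : V × unitInterval → X :=
      fun p => core hn H g (p.1 : Fin n → X) (sv p.1) (((n:ℝ) - 1) * (p.2 : ℝ)) with hΦdef
    have hwcont : Continuous (fun p : V × unitInterval => ((n:ℝ)-1) * (p.2:ℝ)) :=
      continuous_const.mul (continuous_subtype_val.comp continuous_snd)
    have hΦc : Continuous Φ := by
      apply glue_closed (ι := Fin (3*(n-1)))
        (s := fun m => (fun p : V × unitInterval => ((n:ℝ)-1) * (p.2:ℝ)) ⁻¹'
          (Set.Icc (((m:ℕ):ℝ)/3) ((((m:ℕ):ℝ)+1)/3)))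
      · exact fun m => isClosed_Icc.preimage hwcont
      · apply Set.eq_univ_of_forall
        intro p
        have h0 : (0:ℝ) ≤ ((n:ℝ)-1) * (p.2:ℝ) := mul_nonneg hNpos.le p.2.2.1
        have h1 : ((n:ℝ)-1) * (p.2:ℝ) ≤ (n:ℝ) - 1 := by
          nlinarith [p.2.2.2, p.2.2.1]
        set w : ℝ := ((n:ℝ)-1) * (p.2:ℝ) with hwdef
        rw [Set.mem_iUnion]
        have hcastN : ((3*(n-1):ℕ):ℝ) = 3*((n:ℝ)-1) := by
          push_cast [Nat.cast_sub (by omega : 1 ≤ n)]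
          ring
        by_cases hfl : ⌊3*w⌋₊ ≤ 3*(n-1) - 1
        · refine ⟨⟨⌊3*w⌋₊, by omega⟩, ?_⟩
          simp only [Set.mem_preimage, Set.mem_Icc]
          constructor
          · have := Nat.floor_le (by linarith : (0:ℝ) ≤ 3*w)
            linarith
          · have := (Nat.lt_floor_add_one (3*w)).le
            linarith
        · refine ⟨⟨3*(n-1) - 1, by omega⟩, ?_⟩
          simp only [Set.mem_preimage, Set.mem_Icc]
          have hge : ((3*(n-1):ℕ):ℝ) ≤ ((⌊3*w⌋₊:ℕ):ℝ) := by
            exact_mod_cast (by omega : 3*(n-1) ≤ ⌊3*w⌋₊)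
          have hfle : ((⌊3*w⌋₊:ℕ):ℝ) ≤ 3*w := Nat.floor_le (by linarith)
          have hcast1 : ((3*(n-1) - 1:ℕ):ℝ) = 3*((n:ℝ)-1) - 1 := by
            rw [Nat.cast_sub (by omega : 1 ≤ 3*(n-1)), hcastN]
            norm_num
          rw [hcast1]
          constructor
          · rw [hcastN] at hge
            linarith
          · linarith
      · intro m
        have hmlt : (m:ℕ) < 3*(n-1) := m.is_lt
        set j : ℕ := (m:ℕ)/3 with hjdef
        set q : ℕ := (m:ℕ)%3 with hqdef
        have hjm : (m:ℕ) = 3*j + q := by omega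
        have hjn2 : j ≤ n - 2 := by omega
        have hq3 : q < 3 := by omega
        have hjn : j < n := by omega
        have hj1n : j + 1 < n := by omega
        have hcastm : ((m:ℕ):ℝ) = 3*(j:ℝ) + (q:ℝ) := by exact_mod_cast congrArg (Nat.cast : ℕ → ℝ) hjm
        have hbnd : ∀ p : V × unitInterval,
            p ∈ (fun p : V × unitInterval => ((n:ℝ)-1) * (p.2:ℝ)) ⁻¹'
              (Set.Icc (((m:ℕ):ℝ)/3) ((((m:ℕ):ℝ)+1)/3)) →
            (j:ℝ) + (q:ℝ)/3 ≤ ((n:ℝ)-1) * (p.2:ℝ) ∧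
              ((n:ℝ)-1) * (p.2:ℝ) ≤ (j:ℝ) + ((q:ℝ)+1)/3 := by
          intro p hp
          simp only [Set.mem_preimage, Set.mem_Icc] at hp
          rw [hcastm] at hp
          constructor <;> linarith [hp.1, hp.2]
        have hxc : Continuous (fun p : V × unitInterval => (p.1 : Fin n → X)) :=
          continuous_subtype_val.comp continuous_fst
        have hq012 : q = 0 ∨ q = 1 ∨ q = 2 := by omega
        rcases hq012 with hq | hq | hq
        · apply ContinuousOn.congr
            (f := fun p : V × unitInterval =>
              H (rext (1 - 3*(((n:ℝ)-1) * (p.2:ℝ) - (j:ℝ))), (p.1 : Fin n → X) ⟨j, hjn⟩))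
          · apply Continuous.continuousOn
            exact H.continuous.comp ((continuous_rext.comp
              (continuous_const.sub (continuous_const.mul (hwcont.sub continuous_const)))).prodMk
              ((continuous_apply _).comp hxc))
          · intro p hp
            obtain ⟨hb1, hb2⟩ := hbnd p hp
            rw [hq] at hb1 hb2
            exact core_piece0 hn g H hjn2 (by push_cast at hb1 ⊢; linarith)
              (by push_cast at hb2 ⊢; linarith) hjn
        · apply ContinuousOn.congr
            (f := fun p : V × unitInterval =>
              g (pext (sv p.1) (((j:ℝ) + 3*(((n:ℝ)-1) * (p.2:ℝ) - (j:ℝ)) - 1)/((n:ℝ)-1))))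
          · apply Continuous.continuousOn
            exact g.continuous.comp (continuous_pext_pair.comp
              ((sv.continuous.comp continuous_fst).prodMk
                (((continuous_const.add (continuous_const.mul (hwcont.sub continuous_const))).sub
                  continuous_const).div_const _)))
          · intro p hp
            obtain ⟨hb1, hb2⟩ := hbnd p hp
            rw [hq] at hb1 hb2
            exact core_piece1 hn f g H hH0 (hcv p.1) hjn2
              (by push_cast at hb1 ⊢; linarith) (by push_cast at hb2 ⊢; linarith)
        · apply ContinuousOn.congr
            (f := fun p : V × unitInterval =>
              H (rext (3*(((n:ℝ)-1) * (p.2:ℝ) - (j:ℝ)) - 2), (p.1 : Fin n → X) ⟨j+1, hj1n⟩))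
          · apply Continuous.continuousOn
            exact H.continuous.comp ((continuous_rext.comp
              ((continuous_const.mul (hwcont.sub continuous_const)).sub continuous_const)).prodMk
              ((continuous_apply _).comp hxc))
          · intro p hp
            obtain ⟨hb1, hb2⟩ := hbnd p hp
            rw [hq] at hb1 hb2
            exact core_piece2 hn f g H hH0 hH1 (hcv p.1) hjn2
              (by push_cast at hb1 ⊢; linarith) (by push_cast at hb2 ⊢; linarith) hj1n
    refine ⟨(ContinuousMap.mk Φ hΦc).curry, ?_, ?_⟩
    · intro v j
      have harg : ((n:ℝ)-1) * ((evalPt n j : unitInterval):ℝ) = ((j:ℕ):ℝ) := by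
        show ((n:ℝ)-1) * (((j:ℕ):ℝ)/((n:ℝ)-1)) = ((j:ℕ):ℝ)
        field_simp
      show core hn H g (v : Fin n → X) (sv v) (((n:ℝ)-1) * ((evalPt n j : unitInterval):ℝ))
        = (v : Fin n → X) j
      rw [harg]
      exact core_grid hn g H hH1 _ _ j
    · intro v hv
      have hv' : rtuple ((ρ v : U i) : Fin n → Y) ∈ U i := by
        have hre : rtuple ((ρ v : U i) : Fin n → Y) = f ∘ rtuple (v : Fin n → X) :=
          funext fun j => rfl
        rw [hre]
        exact hv
      have key : sv ⟨rtuple (v : Fin n → X), hv⟩ = rpath (sv v) := by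
        have h1 : (ρ ⟨rtuple (v : Fin n → X), hv⟩ : U i)
            = ⟨rtuple ((ρ v : U i) : Fin n → Y), hv'⟩ :=
          Subtype.ext (funext fun j => rfl)
        show s (ρ ⟨rtuple (v : Fin n → X), hv⟩) = rpath (s (ρ v))
        rw [h1]
        exact hs_sym (ρ v) hv'
      ext t
      have h0t : (0:ℝ) ≤ ((n:ℝ)-1) * (t:ℝ) := mul_nonneg hNpos.le t.2.1
      have h1t : ((n:ℝ)-1) * (t:ℝ) ≤ (n:ℝ) - 1 := by nlinarith [t.2.1, t.2.2]
      have lhs : ((ContinuousMap.mk Φ hΦc).curry ⟨rtuple (v : Fin n → X), hv⟩) t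
          = core hn H g (rtuple (v : Fin n → X)) (sv ⟨rtuple (v : Fin n → X), hv⟩)
            (((n:ℝ)-1) * (t:ℝ)) := rfl
      rw [lhs, key, core_symm hn f g H hH0 hH1 (hcv v) h0t h1t]
      have harg : ((n:ℝ)-1) - ((n:ℝ)-1) * (t:ℝ)
          = ((n:ℝ)-1) * ((unitInterval.symm t : unitInterval):ℝ) := by
        rw [unitInterval.coe_symm_eq]
        ring
      rw [harg]
      rfl

end TransferTC


/-- Bidirectional topological complexity is a homotopy invariant:
if `X` and `Y` are path-connected and homotopy equivalent, then
`TC^β_n(X) = TC^β_n(Y)` for every `n ≥ 2`. -/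
theorem TCbeta_homotopy_invariant (X Y : Type*) [TopologicalSpace X] [TopologicalSpace Y]
    [PathConnectedSpace X] [PathConnectedSpace Y]
    (h : Nonempty (ContinuousMap.HomotopyEquiv X Y)) (n : ℕ) (hn : 2 ≤ n) :
    TCbeta X n = TCbeta Y n := by
  obtain ⟨E⟩ := h
  unfold TCbeta
  congr 1
  ext c
  simp only [Set.mem_setOf_eq]
  constructor
  · rintro ⟨m, hm, hp⟩
    exact ⟨m, hm, transfer_planners E.symm hn hp⟩
  · rintro ⟨m, hm, hp⟩
    exact ⟨m, hm, transfer_planners E hn hp⟩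
end

section
/- For every path-connected topological space X and every n ≥ 1, TC^β_{2n}(X) ≤ TC^β_{2n+1}(X). -/
open unitInterval

namespace TCbetaProofAux

/-! ### The reparametrization `r : I → I` -/

noncomputable def rfun (n : ℕ) (t : ℝ) : ℝ :=
  (t * (2 * n - 1) + min 1 (max 0 (t * (2 * n - 1) - ((n : ℝ) - 1)))) / (2 * n)

lemma clamp_add (v : ℝ) : min 1 (max 0 (1 - v)) + min 1 (max 0 v) = 1 := by
  rcases le_total v 0 with h | h <;> rcases le_total v 1 with h1 | h1 <;>
    simp [min_def, max_def] <;> split_ifs <;> linarith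

lemma rfun_cont (n : ℕ) : Continuous (rfun n) := by
  unfold rfun; fun_prop

lemma rfun_symm (n : ℕ) (hn : 1 ≤ n) (t : ℝ) : rfun n (1 - t) = 1 - rfun n t := by
  have hn' : (1 : ℝ) ≤ n := by exact_mod_cast hn
  have hd : (0 : ℝ) < 2 * n := by linarith
  unfold rfun
  have key := clamp_add (t * (2 * (n : ℝ) - 1) - ((n : ℝ) - 1))
  have h1 : (1 - t) * (2 * (n : ℝ) - 1) - ((n : ℝ) - 1)
      = 1 - (t * (2 * (n : ℝ) - 1) - ((n : ℝ) - 1)) := by ring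
  rw [h1]
  rw [eq_sub_iff_add_eq, ← add_div, div_eq_one_iff_eq hd.ne']
  nlinarith [key]

lemma rfun_mem (n : ℕ) (hn : 1 ≤ n) (t : ℝ) (ht : t ∈ unitInterval) :
    rfun n t ∈ unitInterval := by
  have hn' : (1 : ℝ) ≤ n := by exact_mod_cast hn
  have hd : (0 : ℝ) < 2 * n := by linarith
  obtain ⟨ht0, ht1⟩ := ht
  unfold rfun
  have hu0 : 0 ≤ t * (2 * (n : ℝ) - 1) := by nlinarith
  have hu1 : t * (2 * (n : ℝ) - 1) ≤ 2 * n - 1 := by nlinarith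
  have hc0 : 0 ≤ min 1 (max 0 (t * (2 * (n : ℝ) - 1) - ((n : ℝ) - 1))) :=
    le_min (by norm_num) (le_max_left _ _)
  have hc1 : min 1 (max 0 (t * (2 * (n : ℝ) - 1) - ((n : ℝ) - 1))) ≤ 1 := min_le_left _ _
  constructor
  · exact div_nonneg (by linarith) hd.le
  · rw [div_le_one hd]; linarith

noncomputable def rI (n : ℕ) (hn : 1 ≤ n) : C(unitInterval, unitInterval) :=
  ⟨fun t => ⟨rfun n t, rfun_mem n hn t t.2⟩,
    Continuous.subtype_mk ((rfun_cont n).comp continuous_subtype_val) _⟩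

lemma rI_symm (n : ℕ) (hn : 1 ≤ n) (t : unitInterval) :
    rI n hn (unitInterval.symm t) = unitInterval.symm (rI n hn t) := by
  apply Subtype.ext
  show rfun n ((unitInterval.symm t : ℝ)) = 1 - rfun n t
  rw [unitInterval.coe_symm_eq, rfun_symm n hn]

lemma rfun_eval (n : ℕ) (hn : 1 ≤ n) (j : ℕ) :
    rfun n ((j : ℝ) / (2 * (n : ℝ) - 1))
      = (if j < n then (j : ℝ) else (j : ℝ) + 1) / (2 * n) := by
  have hn' : (1 : ℝ) ≤ n := by exact_mod_cast hn
  have hne : (2 * (n : ℝ) - 1) ≠ 0 := by nlinarith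
  unfold rfun
  rw [div_mul_cancel₀ _ hne]
  split_ifs with h
  · have hj : (j : ℝ) ≤ (n : ℝ) - 1 := by
      have : (j : ℝ) + 1 ≤ n := by exact_mod_cast h
      linarith
    rw [max_eq_left (by linarith), min_eq_right (by norm_num), add_zero]
  · have hj : (n : ℝ) ≤ (j : ℝ) := by exact_mod_cast not_lt.mp h
    rw [max_eq_right (by linarith), min_eq_left (by linarith)]

/-! ### Inserting a midpoint -/

def emb (n : ℕ) (j : Fin (2 * n)) : Fin (2 * n + 1) :=
  if (j : ℕ) < n then ⟨j, by omega⟩ else ⟨(j : ℕ) + 1, by have := j.isLt; omega⟩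

def insMid {X : Type*} (n : ℕ) (p : X) (x : Fin (2 * n) → X) (j : Fin (2 * n + 1)) : X :=
  if h : (j : ℕ) < n then x ⟨j, by omega⟩
  else if h' : (j : ℕ) = n then p
  else x ⟨(j : ℕ) - 1, by have := j.isLt; omega⟩

lemma insMid_cont {X : Type*} [TopologicalSpace X] (n : ℕ) (p : X) :
    Continuous fun x : Fin (2 * n) → X => insMid n p x := by
  apply continuous_pi; intro j
  unfold insMid
  by_cases h : (j : ℕ) < n
  · simp only [dif_pos h]; exact continuous_apply _
  · simp only [dif_neg h]
    by_cases h' : (j : ℕ) = n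
    · simp only [dif_pos h']; exact continuous_const
    · simp only [dif_neg h']; exact continuous_apply _

lemma insMid_emb {X : Type*} (n : ℕ) (p : X) (x : Fin (2 * n) → X) (j : Fin (2 * n)) :
    insMid n p x (emb n j) = x j := by
  unfold insMid emb
  by_cases h : (j : ℕ) < n
  · rw [if_pos h, dif_pos (show ((⟨(j : ℕ), by omega⟩ : Fin (2 * n + 1)) : ℕ) < n from h)]
  · have hj := j.isLt
    rw [if_neg h,
      dif_neg (show ¬ ((⟨(j : ℕ) + 1, by omega⟩ : Fin (2 * n + 1)) : ℕ) < n by simp; omega),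
      dif_neg (show ¬ ((⟨(j : ℕ) + 1, by omega⟩ : Fin (2 * n + 1)) : ℕ) = n by simp; omega)]
    exact congrArg x (Fin.ext (by simp))

lemma insMid_rtuple {X : Type*} (n : ℕ) (hn : 1 ≤ n) (p : X) (x : Fin (2 * n) → X) :
    insMid n p (rtuple x) = rtuple (insMid n p x) := by
  funext j
  have hj := j.isLt
  have hrev : (j.rev : ℕ) = 2 * n - (j : ℕ) := by rw [Fin.val_rev]; omega
  show insMid n p (rtuple x) j = insMid n p x j.rev
  rcases Nat.lt_trichotomy (j : ℕ) n with h | h | h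
  · rw [insMid, dif_pos h, insMid,
      dif_neg (show ¬ (j.rev : ℕ) < n by omega),
      dif_neg (show ¬ (j.rev : ℕ) = n by omega)]
    show x (Fin.rev _) = x _
    exact congrArg x (Fin.ext (by rw [Fin.val_rev]; simp; omega))
  · rw [insMid, dif_neg (by omega), dif_pos h, insMid,
      dif_neg (show ¬ (j.rev : ℕ) < n by omega),
      dif_pos (show (j.rev : ℕ) = n by omega)]
  · rw [insMid, dif_neg (by omega), dif_neg (by omega), insMid,
      dif_pos (show (j.rev : ℕ) < n by omega)]
    show x (Fin.rev _) = x _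
    exact congrArg x (Fin.ext (by rw [Fin.val_rev]; simp; omega))

lemma rI_evalPt (n : ℕ) (hn : 1 ≤ n) (j : Fin (2 * n)) :
    rI n hn (evalPt (2 * n) j) = evalPt (2 * n + 1) (emb n j) := by
  apply Subtype.ext
  show rfun n ((evalPt (2 * n) j : ℝ)) = ((emb n j : ℕ) : ℝ) / (((2 * n + 1 : ℕ) : ℝ) - 1)
  have h1 : ((evalPt (2 * n) j : ℝ)) = (j : ℝ) / (2 * (n : ℝ) - 1) := by
    show ((j : ℕ) : ℝ) / (((2 * n : ℕ) : ℝ) - 1) = _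
    push_cast; ring_nf
  have h2 : (((2 * n + 1 : ℕ) : ℝ) - 1) = 2 * (n : ℝ) := by push_cast; ring
  rw [h1, h2, rfun_eval n hn]
  congr 1
  unfold emb
  split_ifs with h <;> simp

theorem hbp_step {X : Type*} [TopologicalSpace X] [PathConnectedSpace X] (n m : ℕ)
    (hn : 1 ≤ n) (h : HasBidirPlanners X (2 * n + 1) m) : HasBidirPlanners X (2 * n) m := by
  obtain ⟨V, hVopen, hVcov, hVinv, hVsec⟩ := h
  haveI : Nonempty X := PathConnectedSpace.nonempty
  set p : X := Classical.arbitrary X with hp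
  refine ⟨fun i => insMid n p ⁻¹' V i, fun i => (hVopen i).preimage (insMid_cont n p),
    ?_, ?_, ?_⟩
  · apply Set.eq_univ_iff_forall.mpr
    intro x
    have : insMid n p x ∈ ⋃ i, V i := by rw [hVcov]; trivial
    obtain ⟨i, hi⟩ := Set.mem_iUnion.mp this
    exact Set.mem_iUnion.mpr ⟨i, hi⟩
  · intro i x hx
    show insMid n p (rtuple x) ∈ V i
    rw [insMid_rtuple n hn p x]
    exact hVinv i _ hx
  · intro i
    obtain ⟨s, hs1, hs2⟩ := hVsec i
    refine ⟨⟨fun x => (s ⟨insMid n p x.1, x.2⟩).comp (rI n hn), ?_⟩, ?_, ?_⟩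
    · exact (ContinuousMap.continuous_precomp (rI n hn)).comp
        (s.continuous.comp (Continuous.subtype_mk
          ((insMid_cont n p).comp continuous_subtype_val) _))
    · intro x j
      show s ⟨insMid n p x.1, x.2⟩ (rI n hn (evalPt (2 * n) j)) = x.1 j
      rw [rI_evalPt n hn j, hs1 ⟨insMid n p x.1, x.2⟩ (emb n j)]
      exact insMid_emb n p x.1 j
    · intro x hx
      have hmem : rtuple (insMid n p x.1) ∈ V i := by
        rw [← insMid_rtuple n hn p x.1]; exact hx
      have hsub : (⟨insMid n p (rtuple x.1), hx⟩ : V i)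
          = ⟨rtuple (insMid n p x.1), hmem⟩ :=
        Subtype.ext (insMid_rtuple n hn p x.1)
      show (s ⟨insMid n p (rtuple x.1), hx⟩).comp (rI n hn) = _
      rw [hsub, hs2 ⟨insMid n p x.1, x.2⟩ hmem]
      apply ContinuousMap.ext
      intro t
      show s ⟨insMid n p x.1, x.2⟩ (unitInterval.symm (rI n hn t))
        = s ⟨insMid n p x.1, x.2⟩ (rI n hn (unitInterval.symm t))
      rw [rI_symm n hn t]

end TCbetaProofAux


/-- For every path-connected space `X` and every `n ≥ 1`,
`TC^β_{2n}(X) ≤ TC^β_{2n+1}(X)`. -/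
theorem TCbeta_even_le_odd (X : Type*) [TopologicalSpace X] [PathConnectedSpace X]
    (n : ℕ) (hn : 1 ≤ n) :
    TCbeta X (2 * n) ≤ TCbeta X (2 * n + 1) := by
  apply sInf_le_sInf
  rintro k ⟨m, rfl, h⟩
  exact ⟨m, rfl, TCbetaProofAux.hbp_step n m hn h⟩
end

section
/- For a CW complex X and n ≥ 2, the symmetrized topological complexity is bounded below by the sectional category of the diagonal inclusion into the n-th symmetric product: TC^Σ_n(X) ≥ secat(Δ : X → SP^n(X)). -/
open unitInterval

noncomputable section

/-- The setoid on `X^n` identifying a tuple with its reversal (the `ℤ/2`-action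
generated by `β`). -/
def bpSetoid (X : Type*) (n : ℕ) : Setoid (Fin n → X) where
  r x y := x = y ∨ x = rtuple y
  iseqv := by
    constructor
    · intro x; exact Or.inl rfl
    · intro x y h
      rcases h with h | h
      · exact Or.inl h.symm
      · refine Or.inr ?_
        funext j
        simp [h, rtuple, Fin.rev_rev]
    · intro x y z h1 h2
      rcases h1 with h1 | h1 <;> rcases h2 with h2 | h2
      · exact Or.inl (h1.trans h2)
      · exact Or.inr (h1.trans h2)
      · subst h1 h2; exact Or.inr rfl
      · subst h1 h2
        refine Or.inl ?_
        funext j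
        simp [rtuple, Fin.rev_rev]

/-- The `n`-th bidirectional product `βP^n(X) = X^n/β`. -/
def bP (X : Type*) [TopologicalSpace X] (n : ℕ) : Type _ := Quotient (bpSetoid X n)

instance (X : Type*) [TopologicalSpace X] (n : ℕ) : TopologicalSpace (bP X n) :=
  instTopologicalSpaceQuotient

/-- The setoid on `X^n` identifying tuples in the same `Σ_n`-orbit. -/
def spSetoid (X : Type*) (n : ℕ) : Setoid (Fin n → X) where
  r x y := ∃ sg : Equiv.Perm (Fin n), x = permTuple sg y
  iseqv := by
    constructor
    · intro x; exact ⟨1, rfl⟩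
    · rintro x y ⟨sg, h⟩
      refine ⟨sg⁻¹, ?_⟩
      funext j
      simp [h, permTuple]
    · rintro x y z ⟨sg, h1⟩ ⟨tu, h2⟩
      refine ⟨sg.trans tu, ?_⟩
      funext j
      simp [h1, h2, permTuple]

/-- The `n`-th symmetric product `SP^n(X) = X^n/Σ_n`. -/
def SP (X : Type*) [TopologicalSpace X] (n : ℕ) : Type _ := Quotient (spSetoid X n)

instance (X : Type*) [TopologicalSpace X] (n : ℕ) : TopologicalSpace (SP X n) :=
  instTopologicalSpaceQuotient

/-- The diagonal inclusion `Δ : X → SP^n(X)`. -/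
def diagSP (X : Type*) [TopologicalSpace X] (n : ℕ) : C(X, SP X n) :=
  ⟨fun x => Quotient.mk (spSetoid X n) (fun _ => x),
    Continuous.comp continuous_quotient_mk' (continuous_pi fun _ => continuous_id)⟩

/-- The diagonal inclusion `Δ : X → βP^n(X)`. -/
def diagBP (X : Type*) [TopologicalSpace X] (n : ℕ) : C(X, bP X n) :=
  ⟨fun x => Quotient.mk (bpSetoid X n) (fun _ => x),
    Continuous.comp continuous_quotient_mk' (continuous_pi fun _ => continuous_id)⟩

/-- The natural map `βP^n(X) → SP^n(X)` induced by the identity of `X^n`. -/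
def bpToSp (X : Type*) [TopologicalSpace X] (n : ℕ) : C(bP X n, SP X n) :=
  ⟨Quotient.map' id (fun x y h => by
      rcases h with h | h
      · exact ⟨1, h⟩
      · exact ⟨Fin.revPerm, h⟩),
    Continuous.quotient_map' continuous_id _⟩

/-- The sectional category `secat(f)` of a map `f : A → B`: the smallest `k` such that
`B` is covered by `k` open sets, on each of which there is a continuous map `s` to `A`
with `f ∘ s` homotopic to the inclusion. -/
def secat {A B : Type*} [TopologicalSpace A] [TopologicalSpace B] (f : C(A, B)) : ℕ∞ :=
  sInf {k : ℕ∞ | ∃ m : ℕ, (m : ℕ∞) = k ∧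
    ∃ U : Fin m → Set B,
      (∀ i, IsOpen (U i)) ∧ (⋃ i, U i) = Set.univ ∧
      (∀ i, ∃ s : C(U i, A),
        (f.comp s).Homotopic ⟨Subtype.val, continuous_subtype_val⟩)}

end


section Aux

variable {X : Type*} [TopologicalSpace X] {n : ℕ}

lemma permTuple_continuous (sg : Equiv.Perm (Fin n)) :
    Continuous (permTuple (X := X) sg) :=
  continuous_pi fun j => continuous_apply (sg j)

omit [TopologicalSpace X] in
lemma permTuple_permTuple (sg : Equiv.Perm (Fin n)) (x : Fin n → X) :
    permTuple sg⁻¹ (permTuple sg x) = x := by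
  funext j; simp [permTuple]

lemma isOpenMap_spMk : IsOpenMap (Quotient.mk (spSetoid X n)) := by
  intro W hW
  rw [isQuotientMap_quotient_mk'.isOpen_preimage.symm]
  show IsOpen ((Quotient.mk (spSetoid X n)) ⁻¹' ((Quotient.mk (spSetoid X n)) '' W))
  have : (Quotient.mk (spSetoid X n)) ⁻¹' ((Quotient.mk (spSetoid X n)) '' W)
      = ⋃ sg : Equiv.Perm (Fin n), (permTuple sg) ⁻¹' W := by
    ext y
    simp only [Set.mem_preimage, Set.mem_image, Set.mem_iUnion]
    constructor
    · rintro ⟨x, hx, hxy⟩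
      obtain ⟨sg, hsg⟩ := Quotient.exact' hxy
      exact ⟨sg, by rwa [← hsg]⟩
    · rintro ⟨sg, hsg⟩
      exact ⟨permTuple sg y, hsg, Quotient.sound' ⟨sg, rfl⟩⟩
  rw [this]
  exact isOpen_iUnion fun sg => hW.preimage (permTuple_continuous sg)

end Aux

universe u

/-! The structures `RelativeCWComplex` / `CWComplex` of Mathlib (December 2024,
`Mathlib/Topology/CWComplex.lean`) were removed; they are restated here with their old meaning. -/

namespace CWComplex

/-- The `(n-1)`-sphere, as a subspace of `ℝ^n`. -/
noncomputable def sphere (n : ℤ) : TopCat.{u} :=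
  TopCat.of <| ULift <| Metric.sphere (0 : EuclideanSpace ℝ <| Fin <| Int.toNat <| n + 1) 1

/-- The closed unit disk. -/
noncomputable def closedBall (n : ℤ) : TopCat.{u} :=
  TopCat.of <| ULift <| Metric.closedBall (0 : EuclideanSpace ℝ <| Fin <| Int.toNat <| n + 1) 1

/-- The inclusion of the sphere into the closed disk. -/
noncomputable def sphereInclusion (n : ℤ) : sphere.{u} n ⟶ closedBall.{u} n :=
  TopCat.ofHom
    ⟨fun p => ⟨⟨p.down.1, le_of_eq p.down.2⟩⟩,
      continuous_uliftUp.comp ((continuous_subtype_val.comp continuous_uliftDown).subtype_mk _)⟩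

/-- Attaching generalized cells along `f`. -/
structure AttachGeneralizedCells {S D : TopCat.{u}} (f : S ⟶ D) (X X' : TopCat.{u}) where
  cells : Type u
  attachMaps : cells → (S ⟶ X)
  iso_pushout : X' ≅ CategoryTheory.Limits.pushout (CategoryTheory.Limits.Sigma.desc attachMaps)
    (CategoryTheory.Limits.Sigma.map fun _ => f)

/-- Attaching `n`-cells. -/
def AttachCells (n : ℤ) := AttachGeneralizedCells.{u} (sphereInclusion.{u} n)

end CWComplex

/-- A relative CW-complex. -/
structure RelativeCWComplex where
  sk : ℕ → TopCat.{u}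
  attachCells (n : ℕ) : CWComplex.AttachCells.{u} ((n : ℤ) - 1) (sk n) (sk (n + 1))

/-- A CW-complex: a relative CW-complex whose `sk 0` is empty. -/
structure CWComplex extends RelativeCWComplex.{u} where
  isEmpty_sk_zero : IsEmpty (sk 0)

namespace RelativeCWComplex

/-- The inclusion of the skeletons. -/
noncomputable def skInclusion (X : RelativeCWComplex.{u}) (n : ℕ) : X.sk n ⟶ X.sk (n + 1) :=
  CategoryTheory.CategoryStruct.comp (CategoryTheory.Limits.pushout.inl
    (CategoryTheory.Limits.Sigma.desc (X.attachCells n).attachMaps)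
    (CategoryTheory.Limits.Sigma.map fun _ => CWComplex.sphereInclusion.{u} ((n : ℤ) - 1)))
    (X.attachCells n).iso_pushout.inv

/-- The underlying topological space: the colimit of the skeletons. -/
noncomputable def toTopCat (X : RelativeCWComplex.{u}) : TopCat.{u} :=
  CategoryTheory.Limits.colimit (CategoryTheory.Functor.ofSequence X.skInclusion)

end RelativeCWComplex

/-- For a CW complex `X` and `n ≥ 2`,
`TC^Σ_n(X) ≥ secat(Δ : X → SP^n(X))`. -/
theorem TCsym_ge_secat_diag_SP (X : Type u) [TopologicalSpace X] [PathConnectedSpace X]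
    (hX : ∃ C : CWComplex.{u}, Nonempty (X ≃ₜ C.toRelativeCWComplex.toTopCat))
    (n : ℕ) (hn : 2 ≤ n) :
    secat (diagSP X n) ≤ TCsym X n := by
  unfold secat TCsym
  apply sInf_le_sInf
  rintro k ⟨m, rfl, hm⟩
  obtain ⟨U, hopen, hcov, hinv, hsec⟩ := hm
  haveI : NeZero n := ⟨by omega⟩
  set q : (Fin n → X) → SP X n := Quotient.mk (spSetoid X n) with hq
  have hqcont : Continuous q := continuous_quotient_mk'
  refine ⟨m, rfl, fun i => q '' U i, fun i => ?_, ?_, fun i => ?_⟩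
  · -- openness
    refine isQuotientMap_quotient_mk'.isOpen_preimage.1 ?_
    show IsOpen (q ⁻¹' (q '' U i))
    have hpre : q ⁻¹' (q '' U i) = U i := by
      ext y
      constructor
      · rintro ⟨x, hx, hxy⟩
        obtain ⟨sg, hsg⟩ := Quotient.exact' hxy
        have := hinv i sg⁻¹ x hx
        rwa [hsg, permTuple_permTuple] at this
      · intro hy; exact ⟨y, hy, rfl⟩
    rw [hpre]; exact hopen i
  · -- covering
    apply Set.eq_univ_of_forall
    intro v
    obtain ⟨x, rfl⟩ := Quotient.exists_rep v
    have hx : x ∈ ⋃ i, U i := hcov ▸ Set.mem_univ x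
    obtain ⟨_, ⟨i, rfl⟩, hxi⟩ := hx
    exact Set.mem_iUnion.2 ⟨i, x, hxi, rfl⟩
  · -- section + homotopy
    obtain ⟨s, h0, h1, heq⟩ := hsec i
    -- representative choice
    let rep : ↥(q '' U i) → ↥(U i) := fun v => ⟨v.2.choose, v.2.choose_spec.1⟩
    have hrep : ∀ v : ↥(q '' U i), q ((rep v : Fin n → X)) = (v : SP X n) :=
      fun v => v.2.choose_spec.2
    -- restricted quotient map
    let qU : ↥(U i) → ↥(q '' U i) := fun x => ⟨q (x : Fin n → X), ⟨x, x.2, rfl⟩⟩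
    have hqUcont : Continuous qU :=
      Continuous.subtype_mk (hqcont.comp continuous_subtype_val) _
    have hqUsurj : Function.Surjective qU := by
      rintro ⟨v, x, hx, rfl⟩; exact ⟨⟨x, hx⟩, rfl⟩
    have hqUopen : IsOpenMap qU := by
      intro W hW
      obtain ⟨W', hW', rfl⟩ := isOpen_induced_iff.1 hW
      have h1' : IsOpen (Subtype.val '' (Subtype.val ⁻¹' W' : Set ↥(U i))) :=
        (hopen i).isOpenMap_subtype_val _ hW
      have h2' : IsOpen (q '' (Subtype.val '' (Subtype.val ⁻¹' W' : Set ↥(U i)))) :=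
        isOpenMap_spMk _ h1'
      have : qU '' (Subtype.val ⁻¹' W')
          = Subtype.val ⁻¹' (q '' (Subtype.val '' (Subtype.val ⁻¹' W' : Set ↥(U i)))) := by
        ext v
        simp only [Set.mem_image, Set.mem_preimage]
        constructor
        · rintro ⟨x, hx, rfl⟩
          exact ⟨x, ⟨x, hx, rfl⟩, rfl⟩
        · rintro ⟨y, ⟨x, hx, rfl⟩, hxy⟩
          exact ⟨x, hx, Subtype.ext hxy⟩
      rw [this]
      exact h2'.preimage continuous_subtype_val
    have hqUoq : IsOpenQuotientMap qU := ⟨hqUsurj, hqUcont, hqUopen⟩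
    -- well-definedness of descent
    have hwd : ∀ (x y : ↥(U i)), q (x : Fin n → X) = q (y : Fin n → X) →
        ∀ t : unitInterval, q (fun j => s x j t) = q (fun j => s y j t) := by
      intro x y hxy t
      obtain ⟨sg, hsg⟩ := Quotient.exact' hxy
      have hx' : permTuple sg (y : Fin n → X) ∈ U i := by
        rw [← hsg]; exact x.2
      have hxval : x = (⟨permTuple sg (y : Fin n → X), hx'⟩ : ↥(U i)) := Subtype.ext hsg
      have hs : s x = permTuple sg (s y) := by rw [hxval]; exact heq y sg hx'
      apply Quotient.sound'
      exact ⟨sg, by funext j; rw [hs]; rfl⟩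
    have hwd0 : ∀ (x y : ↥(U i)), q (x : Fin n → X) = q (y : Fin n → X) →
        s x 0 0 = s y 0 0 := by
      intro x y hxy
      obtain ⟨sg, hsg⟩ := Quotient.exact' hxy
      have hx' : permTuple sg (y : Fin n → X) ∈ U i := by
        rw [← hsg]; exact x.2
      have hxval : x = (⟨permTuple sg (y : Fin n → X), hx'⟩ : ↥(U i)) := Subtype.ext hsg
      have hs : s x = permTuple sg (s y) := by rw [hxval]; exact heq y sg hx'
      rw [hs]
      exact h0 y (sg 0) 0
    -- the section
    have hFcont : Continuous (fun x : ↥(U i) => s x 0 0) := by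
      have : Continuous (fun x : ↥(U i) => s x 0) :=
        (continuous_apply (0 : Fin n)).comp s.continuous
      exact this.eval continuous_const
    have hσcont : Continuous (fun v : ↥(q '' U i) => s (rep v) 0 0) := by
      rw [hqUoq.isQuotientMap.continuous_iff]
      have : (fun v : ↥(q '' U i) => s (rep v) 0 0) ∘ qU
          = fun x : ↥(U i) => s x 0 0 := by
        funext x
        exact hwd0 (rep (qU x)) x (hrep (qU x))
      rw [this]; exact hFcont
    refine ⟨⟨fun v => s (rep v) 0 0, hσcont⟩, ?_⟩
    -- the homotopy
    have hGcont : Continuous (fun p : unitInterval × ↥(U i) =>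
        q (fun j => s p.2 j p.1)) := by
      apply hqcont.comp
      apply continuous_pi
      intro j
      have h1'' : Continuous (fun p : unitInterval × ↥(U i) => s p.2 j) :=
        (continuous_apply j).comp (s.continuous.comp continuous_snd)
      exact h1''.eval continuous_fst
    have hHcont : Continuous (fun p : unitInterval × ↥(q '' U i) =>
        q (fun j => s (rep p.2) j p.1)) := by
      rw [(IsOpenQuotientMap.id.prodMap hqUoq).isQuotientMap.continuous_iff]
      have : (fun p : unitInterval × ↥(q '' U i) => q (fun j => s (rep p.2) j p.1))
          ∘ (Prod.map id qU)
          = fun p : unitInterval × ↥(U i) => q (fun j => s p.2 j p.1) := by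
        funext p
        exact hwd (rep (qU p.2)) p.2 (hrep (qU p.2)) p.1
      rw [this]; exact hGcont
    constructor
    exact {
      toFun := fun p => q (fun j => s (rep p.2) j p.1)
      continuous_toFun := hHcont
      map_zero_left := by
        intro v
        show q (fun j => s (rep v) j 0) = diagSP X n (s (rep v) 0 0)
        have : (fun j => s (rep v) j 0) = fun _ => s (rep v) 0 0 := by
          funext j; exact h0 (rep v) j 0
        rw [this]; rfl
      map_one_left := by
        intro v
        show q (fun j => s (rep v) j 1) = (v : SP X n)
        have : (fun j => s (rep v) j 1) = ((rep v : Fin n → X)) := by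
          funext j; exact h1 (rep v) j
        rw [this]; exact hrep v }
end

section
/- For a CW complex X and n ≥ 2, the bidirectional topological complexity is bounded below by the sectional category of the diagonal inclusion into the n-th bidirectional product: TC^β_n(X) ≥ secat(Δ : X → βP^n(X)). -/
open unitInterval

universe u


namespace BPAux

variable {X : Type*} [TopologicalSpace X] {n : ℕ}

lemma rtuple_rtuple (x : Fin n → X) : rtuple (rtuple x) = x := by
  funext j; simp [rtuple, Fin.rev_rev]

lemma continuous_rtuple : Continuous (rtuple : (Fin n → X) → (Fin n → X)) :=
  continuous_pi fun _ => continuous_apply _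

lemma q_eq_iff {x y : Fin n → X} :
    Quotient.mk (bpSetoid X n) x = Quotient.mk (bpSetoid X n) y ↔ (x = y ∨ x = rtuple y) :=
  Quotient.eq

lemma isOpenMap_q : IsOpenMap (Quotient.mk (bpSetoid X n)) := by
  intro W hW
  have hpre : Quotient.mk (bpSetoid X n) ⁻¹' (Quotient.mk (bpSetoid X n) '' W)
      = W ∪ rtuple ⁻¹' W := by
    ext x
    constructor
    · rintro ⟨y, hy, hqy⟩
      rcases q_eq_iff.mp hqy with h | h
      · exact Or.inl (h ▸ hy)
      · right
        have : y = rtuple x := by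
          have := congrArg rtuple h
          rwa [rtuple_rtuple] at this
        exact Set.mem_preimage.mpr (this ▸ hy)
    · rintro (hx | hx)
      · exact ⟨x, hx, rfl⟩
      · exact ⟨rtuple x, hx, q_eq_iff.mpr (Or.inr rfl)⟩
  rw [isOpen_coinduced (f := Quotient.mk (bpSetoid X n))]
  rw [show Quotient.mk (bpSetoid X n) ⁻¹' (Quotient.mk (bpSetoid X n) '' W) = _ from hpre]
  exact hW.union (hW.preimage continuous_rtuple)

/-- The point 1/2 of the unit interval. -/
noncomputable def half : unitInterval := ⟨1/2, by norm_num⟩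

lemma symm_half : unitInterval.symm half = half := by
  ext; norm_num [unitInterval.symm, half]

/-- Convex combination: at r = 0 gives 1/2, at r = 1 gives a. -/
noncomputable def cpt (r a : unitInterval) : unitInterval :=
  ⟨(1 - (r : ℝ)) / 2 + r * a, by
    obtain ⟨r, hr0, hr1⟩ := r
    obtain ⟨a, ha0, ha1⟩ := a
    constructor
    · nlinarith
    · nlinarith⟩

lemma cpt_zero (a : unitInterval) : cpt 0 a = half := by
  ext; norm_num [cpt, half]

lemma cpt_one (a : unitInterval) : cpt 1 a = a := by
  ext; simp [cpt]

lemma symm_cpt (r a : unitInterval) :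
    unitInterval.symm (cpt r a) = cpt r (unitInterval.symm a) := by
  ext
  simp only [unitInterval.coe_symm_eq, cpt]
  ring

lemma continuous_cpt_left (a : unitInterval) : Continuous fun r => cpt r a := by
  apply Continuous.subtype_mk
  fun_prop

lemma evalPt_rev (hn : 2 ≤ n) (j : Fin n) :
    evalPt n j.rev = unitInterval.symm (evalPt n j) := by
  ext
  simp only [evalPt, unitInterval.coe_symm_eq]
  have hj : (j : ℕ) < n := j.is_lt
  have h1 : ((j.rev : Fin n) : ℕ) = n - ((j : ℕ) + 1) := Fin.val_rev j
  have h2 : ((n - ((j : ℕ) + 1) : ℕ) : ℝ) = (n : ℝ) - ((j : ℕ) + 1) := by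
    have hle : (j : ℕ) + 1 ≤ n := hj
    push_cast [Nat.cast_sub hle]
    ring
  rw [h1, h2]
  have hne : (n : ℝ) - 1 ≠ 0 := by
    have : (2 : ℝ) ≤ (n : ℝ) := by exact_mod_cast hn
    intro h; nlinarith
  field_simp
  ring

end BPAux

/-- For a CW complex `X` and `n ≥ 2`,
`TC^β_n(X) ≥ secat(Δ : X → βP^n(X))`. -/
theorem TCbeta_ge_secat_diag_bP (X : Type u) [TopologicalSpace X] [PathConnectedSpace X]
    (hX : Nonempty (TopCat.CWComplex.{u} (TopCat.of X)))
    (n : ℕ) (hn : 2 ≤ n) :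
    secat (diagBP X n) ≤ TCbeta X n := by
  classical
  apply sInf_le_sInf
  rintro k ⟨m, rfl, U, hopen, hcover, hinv, hsec⟩
  refine ⟨m, rfl, ?_⟩
  set q : (Fin n → X) → bP X n := Quotient.mk (bpSetoid X n) with hq
  -- the open sets downstairs
  refine ⟨fun i => q '' (U i), ?_, ?_, ?_⟩
  · -- openness
    intro i
    exact BPAux.isOpenMap_q _ (hopen i)
  · -- covering
    apply Set.eq_univ_of_forall
    intro v
    obtain ⟨x, rfl⟩ := Quotient.exists_rep v
    have hx : x ∈ ⋃ i, U i := hcover ▸ Set.mem_univ x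
    obtain ⟨_, ⟨i, rfl⟩, hxi⟩ := hx
    exact Set.mem_iUnion.mpr ⟨i, ⟨x, hxi, rfl⟩⟩
  · -- sections up to homotopy
    intro i
    obtain ⟨s, hsev, hsequiv⟩ := hsec i
    set V : Set (bP X n) := q '' (U i) with hV
    -- a chosen representative for each point of V
    have hrep : ∀ v : V, ∃ x, x ∈ U i ∧ q x = (v : bP X n) := fun v => v.2
    set rep : V → (Fin n → X) := fun v => (hrep v).choose with hrepdef
    have hrepU : ∀ v : V, rep v ∈ U i := fun v => (hrep v).choose_spec.1
    have hrepq : ∀ v : V, q (rep v) = (v : bP X n) := fun v => (hrep v).choose_spec.2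
    -- the tuple of intermediate points
    set tup : (U i) → unitInterval → (Fin n → X) :=
      fun x r j => s x (BPAux.cpt r (evalPt n j)) with htup
    -- key well-definedness lemma
    have hwd : ∀ x y : (U i), q (x : Fin n → X) = q y → ∀ r, q (tup x r) = q (tup y r) := by
      intro x y hxy r
      rcases BPAux.q_eq_iff.mp hxy with h | h
      · have : x = y := Subtype.ext h
        rw [this]
      · have hx' : x = ⟨rtuple (y : Fin n → X), hinv i _ y.2⟩ := Subtype.ext h
        have hs : s x = rpath (s y) := by
          rw [hx']; exact hsequiv y (hinv i _ y.2)
        apply BPAux.q_eq_iff.mpr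
        right
        funext j
        show s x (BPAux.cpt r (evalPt n j)) = tup y r j.rev
        rw [hs]
        show (s y) (unitInterval.symm (BPAux.cpt r (evalPt n j))) = _
        rw [BPAux.symm_cpt, ← BPAux.evalPt_rev hn]
      -- end hwd
    have hwd' : ∀ x y : (U i), q (x : Fin n → X) = q y →
        s x BPAux.half = s y BPAux.half := by
      intro x y hxy
      rcases BPAux.q_eq_iff.mp hxy with h | h
      · rw [Subtype.ext h]
      · have hx' : x = ⟨rtuple (y : Fin n → X), hinv i _ y.2⟩ := Subtype.ext h
        have hs : s x = rpath (s y) := by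
          rw [hx']; exact hsequiv y (hinv i _ y.2)
        rw [hs]
        show (s y) (unitInterval.symm BPAux.half) = _
        rw [BPAux.symm_half]
    -- the restricted quotient map e : U i → V
    set e : (U i) → V := fun x => ⟨q x, ⟨x, x.2, rfl⟩⟩ with he
    have hecont : Continuous e :=
      Continuous.subtype_mk (continuous_quotient_mk'.comp continuous_subtype_val) _
    have hesurj : Function.Surjective e := by
      rintro ⟨v, x, hx, hqx⟩
      exact ⟨⟨x, hx⟩, Subtype.ext hqx⟩
    have heopen : IsOpenMap e := by
      intro W hW
      obtain ⟨W', hW', rfl⟩ := isOpen_induced_iff.mp hW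
      have himg : e '' (Subtype.val ⁻¹' W') = Subtype.val ⁻¹' (q '' (W' ∩ U i)) := by
        ext v
        constructor
        · rintro ⟨x, hx, rfl⟩
          exact ⟨x, ⟨hx, x.2⟩, rfl⟩
        · rintro ⟨x, ⟨hx1, hx2⟩, hqx⟩
          exact ⟨⟨x, hx2⟩, hx1, Subtype.ext hqx⟩
      rw [himg]
      exact (BPAux.isOpenMap_q _ (hW'.inter (hopen i))).preimage continuous_subtype_val
    have heq : Topology.IsQuotientMap e := heopen.isQuotientMap hecont hesurj
    -- the section t : V → X
    have htcont : Continuous (fun v : V => s (⟨rep v, hrepU v⟩ : U i) BPAux.half) := by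
      rw [heq.continuous_iff]
      have : (fun v : V => s (⟨rep v, hrepU v⟩ : U i) BPAux.half) ∘ e
          = fun x : U i => s x BPAux.half := by
        funext x
        exact hwd' _ x (hrepq (e x))
      rw [this]
      exact (continuous_eval_const BPAux.half).comp s.continuous
    refine ⟨⟨fun v => s (⟨rep v, hrepU v⟩ : U i) BPAux.half, htcont⟩, ?_⟩
    -- the homotopy
    set G : unitInterval × V → bP X n :=
      fun p => q (tup ⟨rep p.2, hrepU p.2⟩ p.1) with hG
    have hGe : ∀ (r : unitInterval) (x : U i), G (r, e x) = q (tup x r) := by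
      intro r x
      exact hwd _ x (hrepq (e x)) r
    have hGcont : Continuous G := by
      have he2 : Topology.IsQuotientMap (Prod.map (id : unitInterval → unitInterval) e) :=
        (IsOpenMap.id.prodMap heopen).isQuotientMap
          (continuous_id.prodMap hecont)
          ((Function.surjective_id).prodMap hesurj)
      rw [he2.continuous_iff]
      have : G ∘ (Prod.map id e) = fun p : unitInterval × U i => q (tup p.2 p.1) := by
        funext p
        exact hGe p.1 p.2
      rw [this]
      apply Continuous.comp continuous_quotient_mk'
      apply continuous_pi
      intro j
      exact (s.continuous.comp continuous_snd).eval
        ((BPAux.continuous_cpt_left (evalPt n j)).comp continuous_fst)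
    refine ⟨⟨⟨G, hGcont⟩, ?_, ?_⟩⟩
    · -- at 0 : the diagonal on the section
      intro v
      show q (tup ⟨rep v, hrepU v⟩ 0) = _
      have : tup ⟨rep v, hrepU v⟩ 0
          = fun _ => s (⟨rep v, hrepU v⟩ : U i) BPAux.half := by
        funext j
        show s _ (BPAux.cpt 0 (evalPt n j)) = _
        rw [BPAux.cpt_zero]
      rw [this]
      rfl
    · -- at 1 : the inclusion
      intro v
      show q (tup ⟨rep v, hrepU v⟩ 1) = (v : bP X n)
      have : tup ⟨rep v, hrepU v⟩ 1 = rep v := by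
        funext j
        show s _ (BPAux.cpt 1 (evalPt n j)) = _
        rw [BPAux.cpt_one]
        exact hsev _ j
      rw [this]
      exact hrepq v
end

section
/- If n > 1 is odd, then for every topological space X the n-th bidirectional product βP^n(X) is homeomorphic to βP^{n−1}(X) × X. -/
open unitInterval

section BPOdd

variable {X : Type*} [TopologicalSpace X]

private lemma rev_mid (m : ℕ) : (⟨m, by omega⟩ : Fin (2*m+1)).rev = ⟨m, by omega⟩ := by
  apply Fin.ext; simp [Fin.rev]; omega

private lemma rev_succAbove (m : ℕ) (j : Fin (2*m)) :
    ((⟨m, by omega⟩ : Fin (2*m+1)).succAbove j).rev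
      = (⟨m, by omega⟩ : Fin (2*m+1)).succAbove j.rev := by
  have hj := j.is_lt
  apply Fin.ext
  simp only [Fin.succAbove, Fin.rev, Fin.lt_def, Fin.coe_castSucc, Fin.val_succ]
  split_ifs <;> simp_all <;> omega

private lemma rtuple_insertNth (m : ℕ) (a : X) (y : Fin (2*m) → X) :
    rtuple (Fin.insertNth (⟨m, by omega⟩ : Fin (2*m+1)) a y)
      = Fin.insertNth (⟨m, by omega⟩ : Fin (2*m+1)) a (rtuple y) := by
  set mid : Fin (2*m+1) := ⟨m, by omega⟩ with hmid
  funext j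
  refine Fin.succAboveCases
    (α := fun j => rtuple (Fin.insertNth (α := fun _ => X) mid a y) j
      = Fin.insertNth (α := fun _ => X) mid a (rtuple y) j) mid ?_ ?_ j
  · show Fin.insertNth (α := fun _ => X) mid a y mid.rev
        = Fin.insertNth (α := fun _ => X) mid a (rtuple y) mid
    rw [rev_mid]
    simp [Fin.insertNth_apply_same]
    exact Fin.insertNth_apply_same (α := fun _ => X) mid a y
  · intro i
    show Fin.insertNth (α := fun _ => X) mid a y (mid.succAbove i).rev
        = Fin.insertNth (α := fun _ => X) mid a (rtuple y) (mid.succAbove i)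
    rw [rev_succAbove]
    simp [Fin.insertNth_apply_succAbove, rtuple]
    exact Fin.insertNth_apply_succAbove (α := fun _ => X) mid a y i.rev

private lemma continuous_rtuple (n : ℕ) :
    Continuous (rtuple : (Fin n → X) → (Fin n → X)) :=
  continuous_pi fun j => continuous_apply j.rev

private lemma isOpenMap_bp_mk (n : ℕ) :
    IsOpenMap (Quotient.mk (bpSetoid X n)) := by
  intro U hU
  rw [← isQuotientMap_quotient_mk'.isOpen_preimage (s := Quotient.mk (bpSetoid X n) '' U)]
  show IsOpen (Quotient.mk (bpSetoid X n) ⁻¹' (Quotient.mk (bpSetoid X n) '' U))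
  have hpre : Quotient.mk (bpSetoid X n) ⁻¹' (Quotient.mk (bpSetoid X n) '' U)
      = U ∪ rtuple ⁻¹' U := by
    ext x
    simp only [Set.mem_preimage, Set.mem_image, Set.mem_union]
    constructor
    · rintro ⟨y, hy, hxy⟩
      rcases (Quotient.exact hxy : (bpSetoid X n).r y x) with h | h
      · left; rwa [h] at hy
      · right; rwa [h] at hy
    · rintro (h | h)
      · exact ⟨x, h, rfl⟩
      · exact ⟨rtuple x, h, Quotient.sound (Or.inr rfl)⟩
  rw [hpre]
  exact hU.union (hU.preimage (continuous_rtuple n))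

private lemma bP_odd_homeomorph_aux (m : ℕ) (X : Type*) [TopologicalSpace X] :
    Nonempty (bP X (2*m+1) ≃ₜ bP X (2*m) × X) := by
  set mid : Fin (2*m+1) := ⟨m, by omega⟩ with hmid
  -- forward map
  have wdF : ∀ x y : Fin (2*m+1) → X, (bpSetoid X (2*m+1)).r x y →
      ((Quotient.mk (bpSetoid X (2*m)) (fun i => x (mid.succAbove i)), x mid)
        : bP X (2*m) × X)
      = (Quotient.mk (bpSetoid X (2*m)) (fun i => y (mid.succAbove i)), y mid) := by
    rintro x y (rfl | rfl)
    · rfl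
    · refine Prod.ext ?_ ?_
      · refine Quotient.sound (Or.inr ?_)
        funext i
        show y (mid.succAbove i).rev = y (mid.succAbove i.rev)
        rw [rev_succAbove]
      · show y mid.rev = y mid
        rw [rev_mid]
  let f : bP X (2*m+1) → bP X (2*m) × X :=
    Quotient.lift (fun x => ((Quotient.mk (bpSetoid X (2*m)) (fun i => x (mid.succAbove i)),
      x mid) : bP X (2*m) × X)) wdF
  -- backward map
  have wdG : ∀ a : X, ∀ y z : Fin (2*m) → X, (bpSetoid X (2*m)).r y z →
      Quotient.mk (bpSetoid X (2*m+1)) (Fin.insertNth mid a y)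
        = Quotient.mk (bpSetoid X (2*m+1)) (Fin.insertNth mid a z) := by
    rintro a y z (rfl | rfl)
    · rfl
    · exact Quotient.sound (Or.inr (rtuple_insertNth m a z).symm)
  let g : bP X (2*m) × X → bP X (2*m+1) :=
    fun p => Quotient.lift
      (fun y => Quotient.mk (bpSetoid X (2*m+1)) (Fin.insertNth mid p.2 y))
      (wdG p.2) p.1
  have hleft : Function.LeftInverse g f := by
    intro q
    induction q using Quotient.ind with
    | _ x =>
      show Quotient.mk (bpSetoid X (2*m+1))
        (Fin.insertNth mid (x mid) (fun i => x (mid.succAbove i)))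
        = Quotient.mk (bpSetoid X (2*m+1)) x
      exact congrArg _ (Fin.insertNth_self_removeNth mid x)
  have hright : Function.RightInverse g f := by
    rintro ⟨q, a⟩
    induction q using Quotient.ind with
    | _ y =>
      show ((Quotient.mk (bpSetoid X (2*m))
          (fun i => Fin.insertNth (α := fun _ => X) mid a y (mid.succAbove i)),
          Fin.insertNth (α := fun _ => X) mid a y mid) : bP X (2*m) × X)
        = (Quotient.mk (bpSetoid X (2*m)) y, a)
      exact congrArg₂ Prod.mk
        (congrArg _ (funext fun i =>
          Fin.insertNth_apply_succAbove (α := fun _ => X) mid a y i))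
        (Fin.insertNth_apply_same (α := fun _ => X) mid a y)
  -- continuity
  have hf : Continuous f := by
    refine Continuous.quotient_lift ?_ _
    exact Continuous.prodMk
      (continuous_quotient_mk'.comp (continuous_pi fun i => continuous_apply _))
      (continuous_apply mid)
  have hg : Continuous g := by
    have hq : Topology.IsQuotientMap (Prod.map (Quotient.mk (bpSetoid X (2*m))) (id : X → X)) :=
      ((isOpenMap_bp_mk (2*m)).prodMap IsOpenMap.id).isQuotientMap
        (continuous_quotient_mk'.prodMap continuous_id)
        ((Quotient.mk_surjective).prodMap Function.surjective_id)
    refine hq.continuous_iff.mpr ?_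
    have : (g ∘ Prod.map (Quotient.mk (bpSetoid X (2*m))) (id : X → X))
        = fun p : (Fin (2*m) → X) × X =>
            Quotient.mk (bpSetoid X (2*m+1)) (Fin.insertNth mid p.2 p.1) := rfl
    show Continuous (fun p : (Fin (2*m) → X) × X =>
        Quotient.mk (bpSetoid X (2*m+1)) (Fin.insertNth mid p.2 p.1))
    exact continuous_quotient_mk'.comp
      (Continuous.finInsertNth (A := fun _ => X) mid continuous_snd continuous_fst)
  exact ⟨⟨⟨f, g, hleft, hright⟩, hf, hg⟩⟩

end BPOdd

/-- If `n > 1` is odd, then for every topological space `X`,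
`βP^n(X)` is homeomorphic to `βP^{n-1}(X) × X`. -/
theorem bP_odd_homeomorph (n : ℕ) (hn : Odd n) (h1 : 1 < n)
    (X : Type*) [TopologicalSpace X] :
    Nonempty (bP X n ≃ₜ bP X (n - 1) × X) := by
  obtain ⟨m, rfl⟩ := hn
  clear h1
  have h : 2*m+1-1 = 2*m := by omega
  rw [h]
  exact bP_odd_homeomorph_aux m X
end

section
/- For every path-connected topological space X and every l ≥ 1, the second symmetrized topological complexity of X^l is bounded above by the 2l-th bidirectional topological complexity of X: TC^Σ_2(X^l) ≤ TC^β_{2l}(X). -/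
open unitInterval

noncomputable section AuxProof
set_option linter.unusedSectionVars false
variable {X : Type*} [TopologicalSpace X]

def phiEmb (l : ℕ) (y : Fin 2 → (Fin l → X)) : Fin (2*l) → X := fun j =>
  if h : (j : ℕ) < l then y 0 ⟨j, h⟩
  else y 1 ⟨2*l - 1 - (j : ℕ), by have := j.isLt; omega⟩

lemma phiEmb_continuous (l : ℕ) : Continuous (phiEmb (X := X) l) := by
  apply continuous_pi; intro j
  simp only [phiEmb]
  split_ifs with h
  · exact (continuous_apply _).comp (continuous_apply _)
  · exact (continuous_apply _).comp (continuous_apply _)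

lemma phiEmb_rtuple (l : ℕ) (y : Fin 2 → (Fin l → X)) :
    phiEmb l (rtuple y) = rtuple (phiEmb l y) := by
  funext j
  have hj := j.isLt
  have hrev : ((j.rev : Fin (2*l)) : ℕ) = 2*l - 1 - (j : ℕ) := by
    rw [Fin.val_rev]; omega
  rcases lt_or_ge (j : ℕ) l with h | h
  · have h2 : ¬ ((j.rev : Fin (2*l)) : ℕ) < l := by omega
    have h0 : ((0 : Fin 2).rev) = 1 := rfl
    rw [show (rtuple (phiEmb l y)) j = phiEmb l y j.rev from rfl]
    rw [phiEmb, phiEmb]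
    rw [dif_pos h, dif_neg h2]
    simp only [rtuple, h0]
    congr 1
    apply Fin.ext
    simp only [hrev]
    omega
  · have h2 : ((j.rev : Fin (2*l)) : ℕ) < l := by omega
    have h1 : ((1 : Fin 2).rev) = 0 := rfl
    rw [show (rtuple (phiEmb l y)) j = phiEmb l y j.rev from rfl]
    rw [phiEmb, phiEmb]
    rw [dif_neg (by omega : ¬ (j:ℕ) < l), dif_pos h2]
    simp only [rtuple, h1]
    congr 1
    apply Fin.ext
    simp only [hrev]

lemma aMem (l : ℕ) (hl : 1 ≤ l) (r : Fin l) :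
    (0:ℝ) ≤ (r : ℝ) / (2*(l:ℝ) - 1) ∧ (r : ℝ) / (2*(l:ℝ) - 1) ≤ 1 := by
  have h1 : (1:ℝ) ≤ (l:ℝ) := by exact_mod_cast hl
  have h2 : (0:ℝ) < 2*(l:ℝ) - 1 := by linarith
  have h3 : (r:ℝ) ≤ (l:ℝ) - 1 := by
    have := r.isLt
    have : ((r:ℕ):ℝ) + 1 ≤ (l:ℝ) := by exact_mod_cast this
    linarith
  constructor
  · exact div_nonneg (Nat.cast_nonneg _) h2.le
  · rw [div_le_one h2]; linarith

def sig (l : ℕ) (hl : 1 ≤ l) (r : Fin l) : C(unitInterval, unitInterval) :=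
  ⟨fun t => ⟨(1 - (t:ℝ)) * ((r:ℝ)/(2*(l:ℝ)-1)) + (t:ℝ) * (1 - (r:ℝ)/(2*(l:ℝ)-1)), by
      obtain ⟨ha0, ha1⟩ := aMem l hl r
      have ht0 := t.2.1; have ht1 := t.2.2
      constructor
      · have := mul_nonneg (by linarith : (0:ℝ) ≤ 1 - (t:ℝ)) ha0
        have := mul_nonneg ht0 (by linarith : (0:ℝ) ≤ 1 - (r:ℝ)/(2*(l:ℝ)-1))
        linarith
      · nlinarith⟩, by
    apply Continuous.subtype_mk
    fun_prop⟩


lemma evalPt_two_zero : evalPt 2 0 = 0 := by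
  apply Subtype.ext
  simp [evalPt]

lemma evalPt_two_one : evalPt 2 1 = 1 := by
  apply Subtype.ext
  simp [evalPt]
  norm_num

lemma main_reduction (l m : ℕ) (hl : 1 ≤ l)
    (h : HasBidirPlanners X (2*l) m) : HasBidirPlanners (Fin l → X) 2 m := by
  obtain ⟨U, hUo, hUc, hUinv, hUs⟩ := h
  have h1 : (1:ℝ) ≤ (l:ℝ) := by exact_mod_cast hl
  have h2 : (0:ℝ) < 2*(l:ℝ) - 1 := by linarith
  refine ⟨fun i => phiEmb l ⁻¹' U i, fun i => (hUo i).preimage (phiEmb_continuous l), ?_, ?_, ?_⟩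
  · apply Set.eq_univ_of_forall
    intro y
    have : phiEmb l y ∈ ⋃ i, U i := hUc ▸ Set.mem_univ _
    obtain ⟨_, ⟨i, rfl⟩, hi⟩ := this
    exact Set.mem_iUnion.2 ⟨i, hi⟩
  · intro i y hy
    simp only [Set.mem_preimage] at *
    rw [phiEmb_rtuple]
    exact hUinv i _ hy
  · intro i
    obtain ⟨s, hs1, hs2⟩ := hUs i
    have hFc : Continuous (fun p : (phiEmb l ⁻¹' U i) × unitInterval =>
        fun r : Fin l => s ⟨phiEmb l p.1, p.1.2⟩ (sig l hl r p.2)) := by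
      apply continuous_pi; intro r
      have hsc : Continuous (fun p : (phiEmb l ⁻¹' U i) × unitInterval =>
          s ⟨phiEmb l p.1, p.1.2⟩) :=
        s.continuous.comp (Continuous.subtype_mk
          ((phiEmb_continuous l).comp (continuous_subtype_val.comp continuous_fst)) _)
      exact ContinuousEval.continuous_eval.comp
        (hsc.prodMk ((sig l hl r).continuous.comp continuous_snd))
    refine ⟨(ContinuousMap.mk _ hFc).curry, ?_, ?_⟩
    · intro y j
      have hj2 := j.isLt
      rcases (by omega : (j:ℕ) = 0 ∨ (j:ℕ) = 1) with hj | hj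
      · have : j = 0 := Fin.ext (by simpa using hj)
        subst this
        rw [evalPt_two_zero]
        funext r
        have hlt : (r : ℕ) < 2*l := by have := r.isLt; omega
        have hpt : sig l hl r 0 = evalPt (2*l) ⟨r, hlt⟩ := by
          apply Subtype.ext
          show (1 - (0:ℝ)) * ((r:ℝ)/(2*(l:ℝ)-1)) + 0 * (1 - (r:ℝ)/(2*(l:ℝ)-1))
            = ((r:ℝ)) / (((2*l : ℕ):ℝ) - 1)
          push_cast
          ring
        show s ⟨phiEmb l ↑y, y.2⟩ (sig l hl r 0) = (↑y : Fin 2 → Fin l → X) 0 r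
        rw [hpt, hs1 ⟨phiEmb l ↑y, y.2⟩ ⟨r, hlt⟩]
        show phiEmb l ↑y ⟨r, hlt⟩ = (↑y : Fin 2 → Fin l → X) 0 r
        rw [phiEmb, dif_pos (by simpa using r.isLt : ((⟨r, hlt⟩ : Fin (2*l)) : ℕ) < l)]
      · have : j = 1 := Fin.ext (by simpa using hj)
        subst this
        rw [evalPt_two_one]
        funext r
        have hlt : 2*l - 1 - (r : ℕ) < 2*l := by have := r.isLt; omega
        have hpt : sig l hl r 1 = evalPt (2*l) ⟨2*l - 1 - (r:ℕ), hlt⟩ := by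
          apply Subtype.ext
          show (1 - (1:ℝ)) * ((r:ℝ)/(2*(l:ℝ)-1)) + 1 * (1 - (r:ℝ)/(2*(l:ℝ)-1))
            = ((2*l - 1 - (r:ℕ) : ℕ):ℝ) / (((2*l : ℕ):ℝ) - 1)
          have hle : (r:ℕ) ≤ 2*l - 1 := by have := r.isLt; omega
          rw [Nat.cast_sub hle, Nat.cast_sub (by omega : 1 ≤ 2*l)]
          push_cast
          field_simp
          ring
        show s ⟨phiEmb l ↑y, y.2⟩ (sig l hl r 1) = (↑y : Fin 2 → Fin l → X) 1 r
        rw [hpt, hs1 ⟨phiEmb l ↑y, y.2⟩ ⟨2*l - 1 - (r:ℕ), hlt⟩]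
        show phiEmb l ↑y ⟨2*l - 1 - (r:ℕ), hlt⟩ = (↑y : Fin 2 → Fin l → X) 1 r
        have hge : ¬ ((⟨2*l - 1 - (r:ℕ), hlt⟩ : Fin (2*l)) : ℕ) < l := by
          simp only []
          have := r.isLt; omega
        rw [phiEmb, dif_neg hge]
        refine congrArg _ (Fin.ext ?_)
        show 2*l - 1 - (2*l - 1 - (r:ℕ)) = (r:ℕ)
        have := r.isLt; omega
    · intro y hy
      apply ContinuousMap.ext; intro t
      funext r
      have hmem : rtuple (phiEmb l (↑y : Fin 2 → (Fin l → X))) ∈ U i := by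
        rw [← phiEmb_rtuple]; exact hy
      have hsub : (⟨phiEmb l (rtuple (↑y : Fin 2 → (Fin l → X))), hy⟩ : U i)
          = ⟨rtuple (phiEmb l (↑y : Fin 2 → (Fin l → X))), hmem⟩ :=
        Subtype.ext (phiEmb_rtuple l _)
      have heq : s ⟨rtuple (phiEmb l (↑y : Fin 2 → (Fin l → X))), hmem⟩
          = rpath (s ⟨phiEmb l ↑y, y.2⟩) := hs2 ⟨phiEmb l ↑y, y.2⟩ hmem
      show s ⟨phiEmb l (rtuple (↑y : Fin 2 → (Fin l → X))), hy⟩ (sig l hl r t)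
        = s ⟨phiEmb l ↑y, y.2⟩ (sig l hl r (unitInterval.symm t))
      rw [hsub, heq]
      show s ⟨phiEmb l ↑y, y.2⟩ (unitInterval.symm (sig l hl r t))
        = s ⟨phiEmb l ↑y, y.2⟩ (sig l hl r (unitInterval.symm t))
      congr 1
      apply Subtype.ext
      show 1 - ((1 - (t:ℝ)) * ((r:ℝ)/(2*(l:ℝ)-1)) + (t:ℝ) * (1 - (r:ℝ)/(2*(l:ℝ)-1)))
        = (1 - (1 - (t:ℝ))) * ((r:ℝ)/(2*(l:ℝ)-1)) + (1 - (t:ℝ)) * (1 - (r:ℝ)/(2*(l:ℝ)-1))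
      ring

end AuxProof

/-- For every path-connected space `X` and every `l ≥ 1`,
`TC^Σ_2(X^l) ≤ TC^β_{2l}(X)`, where `TC^Σ_2(Y)` of a space `Y` is the number of
swap-invariant open sets covering `Y × Y` admitting swap-equivariant sections of
`e_2`, i.e. `TC^β_2(Y)`. -/
theorem TCsym2_pow_le_TCbeta (X : Type*) [TopologicalSpace X] [PathConnectedSpace X]
    (l : ℕ) (hl : 1 ≤ l) :
    TCbeta (Fin l → X) 2 ≤ TCbeta X (2 * l) := by
  apply sInf_le_sInf
  rintro k ⟨m, rfl, hm⟩
  exact ⟨m, rfl, main_reduction l m hl hm⟩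
end
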